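/- arXiv:1302.3531 — 4 statements merged into one kernel-verified Lean document; each statement's English description precedes it below -/
import Mathlib

section
/- Let H be a finite simple graph with vertex set {1,…,ℓ} and k ≥ 1 edges, and fix e ∈ (0,1). Then there exists a constant C > 0 (depending on H and e) such that every graphon g with edge density e(g) = e satisfies |t(H,g) - e^k| ≤ C·(I(g) - I₀(e)). In particular, among graphons with edge density e, the rate function I attains its minimum I₀(e) only when t(H,g) = e^k, and I(g) - I₀(e) controls |t(H,g) - e^k| linearly. -/
open MeasureTheory Set

/-- `I₀(u) = (1/2)[u ln u + (1-u) ln(1-u)]`; since `Real.log 0 = 0`,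
this automatically satisfies the continuous extension `I₀(0) = I₀(1) = 0`. -/
noncomputable def I0 (u : ℝ) : ℝ :=
  (1/2) * (u * Real.log u + (1 - u) * Real.log (1 - u))


lemma continuous_I0 : Continuous I0 := by
  have h := Real.continuous_mul_log
  exact (continuous_const.mul (h.add (h.comp (continuous_const.sub continuous_id))))

lemma mul_log_ge {u : ℝ} (h0 : 0 ≤ u) : u - 1 ≤ u * Real.log u := by
  rcases h0.eq_or_lt with rfl | hu
  · simp
  · have h1 : Real.log (1/u) ≤ 1/u - 1 := Real.log_le_sub_one_of_pos (by positivity)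
    rw [Real.log_div one_ne_zero hu.ne', Real.log_one] at h1
    have h2 : u * (0 - Real.log u) ≤ u * (1/u - 1) := by
      exact mul_le_mul_of_nonneg_left h1 h0
    have h3 : u * (1/u) = 1 := by field_simp
    nlinarith

lemma abs_I0_le {u : ℝ} (hu : u ∈ Icc (0:ℝ) 1) : |I0 u| ≤ 1 := by
  obtain ⟨h0, h1⟩ := hu
  have a1 : u * Real.log u ≤ 0 := Real.mul_log_nonpos h0 h1
  have a2 : (1-u) * Real.log (1-u) ≤ 0 := Real.mul_log_nonpos (by linarith) (by linarith)
  have b1 : u - 1 ≤ u * Real.log u := mul_log_ge h0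
  have b2 : (1-u) - 1 ≤ (1-u) * Real.log (1-u) := mul_log_ge (by linarith)
  rw [abs_le]; unfold I0; constructor <;> nlinarith

lemma hasDerivAt_I0 {u : ℝ} (h0 : 0 < u) (h1 : u < 1) :
    HasDerivAt I0 ((Real.log u - Real.log (1-u))/2) u := by
  have d1 : HasDerivAt (fun t : ℝ => t * Real.log t) (Real.log u + 1) u :=
    Real.hasDerivAt_mul_log h0.ne'
  have d2 : HasDerivAt (fun t : ℝ => (1-t) * Real.log (1-t))
      ((Real.log (1-u) + 1) * (0 - 1)) u := by
    exact (Real.hasDerivAt_mul_log (by linarith : (1:ℝ) - u ≠ 0)).comp u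
      ((hasDerivAt_const u (1:ℝ)).sub (hasDerivAt_id u))
  have := ((d1.add d2).const_mul (1/2 : ℝ))
  refine this.congr_deriv ?_
  ring

/-- Bernoulli Pinsker-type pointwise bound. -/
lemma pinsker {e : ℝ} (he : e ∈ Ioo (0:ℝ) 1) {u : ℝ} (hu : u ∈ Icc (0:ℝ) 1) :
    (u - e)^2 ≤ I0 u - I0 e - ((Real.log e - Real.log (1-e))/2) * (u - e) := by
  obtain ⟨he0, he1⟩ := he
  set c : ℝ := (Real.log e - Real.log (1-e))/2 with hc
  set F : ℝ → ℝ := fun t => I0 t - I0 e - c*(t-e) - (t-e)^2 with hF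
  have hFe : F e = 0 := by simp [hF]
  -- derivative of F
  set dF : ℝ → ℝ := fun t => (Real.log t - Real.log (1-t))/2 - c - 2*(t-e) with hdF
  have hFd : ∀ t ∈ Ioo (0:ℝ) 1, HasDerivAt F (dF t) t := by
    intro t ht
    have := (((hasDerivAt_I0 ht.1 ht.2).sub (hasDerivAt_const t (I0 e))).sub
      (((hasDerivAt_id t).sub (hasDerivAt_const t e)).const_mul c)).sub
      (((hasDerivAt_id t).sub (hasDerivAt_const t e)).pow 2)
    refine this.congr_deriv ?_
    simp only [hdF, id_eq, Pi.sub_apply]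
    ring
  -- derivative of dF
  have hdFd : ∀ t ∈ Ioo (0:ℝ) 1, HasDerivAt dF ((1/t + 1/(1-t))/2 - 2) t := by
    intro t ht
    have l1 : HasDerivAt Real.log t⁻¹ t := Real.hasDerivAt_log ht.1.ne'
    have l2 : HasDerivAt (fun s : ℝ => Real.log (1-s)) ((1-t)⁻¹ * (0-1)) t :=
      (Real.hasDerivAt_log (sub_ne_zero.mpr (ne_of_lt ht.2).symm)).comp t
        ((hasDerivAt_const t (1:ℝ)).sub (hasDerivAt_id t))
    have ht0 : t ≠ 0 := ht.1.ne'
    have ht1 : (1:ℝ) - t ≠ 0 := ne_of_gt (by linarith [ht.2])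
    have := (((l1.sub l2).div_const 2).sub (hasDerivAt_const t c)).sub
      (((hasDerivAt_id t).sub (hasDerivAt_const t e)).const_mul 2)
    refine this.congr_deriv ?_
    field_simp
    ring
  -- dF is monotone on Ioo 0 1
  have hmono : MonotoneOn dF (Ioo (0:ℝ) 1) := by
    have hint : interior (Ioo (0:ℝ) 1) = Ioo (0:ℝ) 1 := interior_Ioo
    apply monotoneOn_of_deriv_nonneg (convex_Ioo _ _)
    · exact fun t ht => (hdFd t ht).continuousAt.continuousWithinAt
    · rw [hint]; exact fun t ht => ((hdFd t ht).differentiableAt).differentiableWithinAt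
    · rw [hint]
      intro t ht
      rw [(hdFd t ht).deriv]
      have h4 : t*(1-t) ≤ 1/4 := by nlinarith [sq_nonneg (t - 1/2)]
      have hpos : 0 < t*(1-t) := mul_pos ht.1 (by linarith [ht.2])
      have ht0 : t ≠ 0 := ht.1.ne'
      have ht1 : (1:ℝ) - t ≠ 0 := ne_of_gt (by linarith [ht.2])
      have heq : 1/t + 1/(1-t) = 1/(t*(1-t)) := by field_simp; ring
      rw [heq]
      have h5 : (4:ℝ) ≤ 1/(t*(1-t)) := by
        rw [le_div_iff₀ hpos]; linarith
      linarith
  have hdFe : dF e = 0 := by simp [hdF, hc]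
  have heI : e ∈ Ioo (0:ℝ) 1 := ⟨he0, he1⟩
  -- F is continuous
  have hFc : Continuous F := by
    apply ((continuous_I0.sub continuous_const).sub
      (continuous_const.mul (continuous_id.sub continuous_const))).sub
    exact (continuous_id.sub continuous_const).pow 2
  rcases le_total u e with hue | hue
  · -- antitone on Icc 0 e
    have hanti : AntitoneOn F (Icc (0:ℝ) e) := by
      apply antitoneOn_of_deriv_nonpos (convex_Icc _ _) hFc.continuousOn
      · rw [interior_Icc]
        intro t ht
        exact ((hFd t ⟨ht.1, lt_trans ht.2 he1⟩).differentiableAt).differentiableWithinAt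
      · rw [interior_Icc]
        intro t ht
        have htI : t ∈ Ioo (0:ℝ) 1 := ⟨ht.1, lt_trans ht.2 he1⟩
        rw [(hFd t htI).deriv]
        calc dF t ≤ dF e := hmono htI heI ht.2.le
        _ = 0 := hdFe
    have := hanti ⟨hu.1, hue⟩ ⟨he0.le, le_refl e⟩ hue
    rw [hFe] at this
    simpa [hF] using this
  · -- monotone on Icc e 1
    have hmonoF : MonotoneOn F (Icc e 1) := by
      apply monotoneOn_of_deriv_nonneg (convex_Icc _ _) hFc.continuousOn
      · rw [interior_Icc]
        intro t ht
        exact ((hFd t ⟨lt_trans he0 ht.1, ht.2⟩).differentiableAt).differentiableWithinAt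
      · rw [interior_Icc]
        intro t ht
        have htI : t ∈ Ioo (0:ℝ) 1 := ⟨lt_trans he0 ht.1, ht.2⟩
        rw [(hFd t htI).deriv]
        calc (0:ℝ) = dF e := hdFe.symm
        _ ≤ dF t := hmono heI htI ht.1.le
    have := hmonoF ⟨le_refl e, he1.le⟩ ⟨hue, hu.2⟩ hue
    rw [hFe] at this
    simpa [hF] using this

noncomputable def mu01 : Measure ℝ := volume.restrict (Icc 0 1)
instance : IsProbabilityMeasure mu01 := ⟨by simp [mu01, Real.volume_Icc]⟩
example (ℓ : ℕ) : IsProbabilityMeasure (Measure.pi fun _ : Fin ℓ => mu01) := by infer_instance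
example : IsProbabilityMeasure (mu01.prod mu01) := by infer_instance
lemma pi_restrict (ℓ : ℕ) : (volume : Measure (Fin ℓ → ℝ)).restrict (univ.pi fun _ => Icc 0 1)
    = Measure.pi fun _ : Fin ℓ => mu01 := by
  symm
  apply Measure.pi_eq
  intro s hs
  rw [Measure.restrict_apply (MeasurableSet.univ_pi fun i => (hs i))]
  rw [← Set.pi_inter_distrib, volume_pi_pi]
  simp [mu01, Measure.restrict_apply (hs _)]

lemma map_pair {ℓ : ℕ} {a b : Fin ℓ} (hab : a ≠ b) :
    Measure.map (fun x : Fin ℓ → ℝ => (x a, x b)) (Measure.pi fun _ : Fin ℓ => mu01)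
      = mu01.prod mu01 := by
  symm
  apply Measure.prod_eq
  intro s t hs ht
  rw [Measure.map_apply ((measurable_pi_apply a).prodMk (measurable_pi_apply b)) (hs.prod ht)]
  have hpre : (fun x : Fin ℓ → ℝ => (x a, x b)) ⁻¹' (s ×ˢ t)
      = univ.pi (Function.update (Function.update (fun _ => univ) a s) b t) := by
    ext x
    simp only [mem_preimage, mem_prod, mem_pi, mem_univ, forall_true_left]
    constructor
    · rintro ⟨h1, h2⟩ i
      rcases eq_or_ne i b with rfl | hib
      · simpa using h2
      · rcases eq_or_ne i a with rfl | hia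
        · rw [Function.update_of_ne hab, Function.update_self]; exact h1
        · rw [Function.update_of_ne hib, Function.update_of_ne hia]; trivial
    · intro h
      refine ⟨?_, ?_⟩
      · have := h a; rwa [Function.update_of_ne hab, Function.update_self] at this
      · have := h b; rwa [Function.update_self] at this
  rw [hpre, Measure.pi_pi]
  rw [← Finset.mul_prod_erase Finset.univ _ (Finset.mem_univ a),
      ← Finset.mul_prod_erase _ _ (Finset.mem_erase.mpr ⟨hab.symm, Finset.mem_univ b⟩)]
  rw [Finset.prod_eq_one]
  · rw [Function.update_of_ne hab, Function.update_self, Function.update_self, mul_one]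
  · intro i hi
    simp only [Finset.mem_erase] at hi
    rw [Function.update_of_ne hi.1, Function.update_of_ne hi.2.1]
    simp [mu01, Real.volume_Icc]

lemma integrable_bdd {α : Type*} [MeasurableSpace α] {m : Measure α} [IsFiniteMeasure m]
    {f : α → ℝ} (hf : AEStronglyMeasurable f m) {M : ℝ} (h : ∀ x, |f x| ≤ M) :
    Integrable f m :=
  Integrable.mono' (integrable_const M) hf (ae_of_all _ (by simpa [Real.norm_eq_abs] using h))

lemma my_integral_pair {ℓ : ℕ} {a b : Fin ℓ} (hab : a ≠ b) {F : ℝ → ℝ → ℝ}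
    (hF : Measurable (Function.uncurry F)) :
    ∫ x, F (x a) (x b) ∂(Measure.pi fun _ : Fin ℓ => mu01)
      = ∫ z, F z.1 z.2 ∂(mu01.prod mu01) := by
  rw [← map_pair hab, integral_map ((measurable_pi_apply a).prodMk (measurable_pi_apply b)).aemeasurable
    hF.aestronglyMeasurable]

set_option maxHeartbeats 1000000 in
lemma rate_lower {e : ℝ} (he : e ∈ Ioo (0:ℝ) 1) {G : ℝ → ℝ → ℝ}
    (hGm : Measurable (Function.uncurry G)) (hGb : ∀ x y, G x y ∈ Icc (0:ℝ) 1)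
    (hGe : ∫ z, G z.1 z.2 ∂(mu01.prod mu01) = e) :
    ∫ z, (G z.1 z.2 - e)^2 ∂(mu01.prod mu01)
      ≤ (∫ z, I0 (G z.1 z.2) ∂(mu01.prod mu01)) - I0 e := by
  set ρ := mu01.prod mu01 with hρ
  set c : ℝ := (Real.log e - Real.log (1-e))/2 with hc
  have hmeas : Measurable fun z : ℝ × ℝ => G z.1 z.2 := hGm
  have habs : ∀ z : ℝ × ℝ, |G z.1 z.2| ≤ 1 := fun z => by
    have := hGb z.1 z.2; rw [abs_le]; exact ⟨by linarith [this.1], this.2⟩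
  have intG : Integrable (fun z : ℝ × ℝ => G z.1 z.2) ρ :=
    integrable_bdd hmeas.aestronglyMeasurable habs
  have intSq : Integrable (fun z : ℝ × ℝ => (G z.1 z.2 - e)^2) ρ := by
    refine integrable_bdd ((hmeas.sub measurable_const).pow_const 2).aestronglyMeasurable
      (M := 1) (fun z => ?_)
    have h1 := hGb z.1 z.2
    have he0 := he.1; have he1 := he.2
    rw [abs_le]
    constructor <;> nlinarith [h1.1, h1.2]
  have intI0 : Integrable (fun z : ℝ × ℝ => I0 (G z.1 z.2)) ρ :=
    integrable_bdd (continuous_I0.measurable.comp hmeas).aestronglyMeasurable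
      (fun z => abs_I0_le (hGb z.1 z.2))
  have intlin : Integrable (fun z : ℝ × ℝ => I0 e + c * (G z.1 z.2 - e)) ρ :=
    (integrable_const _).add ((intG.sub (integrable_const e)).const_mul c)
  have key : ∫ z, ((G z.1 z.2 - e)^2 + (I0 e + c * (G z.1 z.2 - e))) ∂ρ
      ≤ ∫ z, I0 (G z.1 z.2) ∂ρ := by
    refine integral_mono (intSq.add intlin) intI0 (fun z => ?_)
    have := pinsker he (hGb z.1 z.2)
    simp only [← hc] at this
    linarith
  have int2 : Integrable (fun z : ℝ × ℝ => c * (G z.1 z.2 - e)) ρ := by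
    exact (intG.sub (integrable_const e)).const_mul c
  have int3 : Integrable (fun z : ℝ × ℝ => G z.1 z.2 - e) ρ := by
    exact intG.sub (integrable_const e)
  have h2 : ∫ z, (I0 e + c * (G z.1 z.2 - e)) ∂ρ = I0 e := by
    have e2 : ∫ z, (G z.1 z.2 - e) ∂ρ = 0 := by
      rw [integral_sub intG (integrable_const e), hGe, integral_const]
      simp [measure_univ]
    rw [integral_add (integrable_const _) int2, integral_const, integral_const_mul, e2,
      mul_zero, add_zero]
    simp [measure_univ]
  rw [integral_add intSq intlin, h2] at key
  linarith

set_option maxHeartbeats 2000000 in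
lemma counting (ℓ k : ℕ) (S : Finset (Fin ℓ × Fin ℓ)) (hS : ∀ p ∈ S, p.1 ≠ p.2)
    (hk : k = S.card) {e : ℝ} (he0 : 0 ≤ e) (he1 : e ≤ 1) {G : ℝ → ℝ → ℝ}
    (hGm : Measurable (Function.uncurry G)) (hGb : ∀ x y, G x y ∈ Icc (0:ℝ) 1)
    (hGe : ∫ z, G z.1 z.2 ∂(mu01.prod mu01) = e) :
    |(∫ x, ∏ p ∈ S, G (x p.1) (x p.2) ∂(Measure.pi fun _ : Fin ℓ => mu01)) - e ^ k|
      ≤ 2 ^ k * ∫ z, (G z.1 z.2 - e)^2 ∂(mu01.prod mu01) := by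
  set π : Measure (Fin ℓ → ℝ) := Measure.pi fun _ : Fin ℓ => mu01 with hπ
  set D : ℝ := ∫ z, (G z.1 z.2 - e)^2 ∂(mu01.prod mu01) with hD
  have hDnn : 0 ≤ D := integral_nonneg (fun z => sq_nonneg _)
  have habs : ∀ x y, |G x y - e| ≤ 1 := fun x y => by
    have := hGb x y; rw [abs_le]; exact ⟨by linarith [this.1], by linarith [this.2]⟩
  have mp : ∀ p : Fin ℓ × Fin ℓ, Measurable fun x : Fin ℓ → ℝ => G (x p.1) (x p.2) - e :=
    fun p => (show Measurable fun x : Fin ℓ → ℝ => G (x p.1) (x p.2) from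
      hGm.comp (f := fun x : Fin ℓ → ℝ => (x p.1, x p.2)) ((measurable_pi_apply p.1).prodMk (measurable_pi_apply p.2))).sub
      measurable_const
  -- integrability of each term
  have intT : ∀ T : Finset (Fin ℓ × Fin ℓ),
      Integrable (fun x : Fin ℓ → ℝ =>
        (∏ p ∈ T, (G (x p.1) (x p.2) - e)) * e ^ ((S \ T).card)) π := by
    intro T
    refine integrable_bdd ((Finset.measurable_prod T (fun p _ => mp p)).mul_const
      _).aestronglyMeasurable (M := 1) (fun x => ?_)
    rw [abs_mul, Finset.abs_prod]
    have h1 : ∏ p ∈ T, |G (x p.1) (x p.2) - e| ≤ 1 :=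
      Finset.prod_le_one (fun p _ => abs_nonneg _) (fun p _ => habs _ _)
    have h2 : |e ^ ((S \ T).card)| ≤ 1 := by
      rw [abs_of_nonneg (pow_nonneg he0 _)]
      exact pow_le_one₀ he0 he1
    calc (∏ p ∈ T, |G (x p.1) (x p.2) - e|) * |e ^ ((S \ T).card)|
        ≤ 1 * 1 := mul_le_mul h1 h2 (abs_nonneg _) zero_le_one
      _ = 1 := one_mul 1
  -- zero mean
  have hmeas2 : Measurable fun z : ℝ × ℝ => G z.1 z.2 := hGm
  have intG2 : Integrable (fun z : ℝ × ℝ => G z.1 z.2) (mu01.prod mu01) :=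
    integrable_bdd hmeas2.aestronglyMeasurable (M := 1)
      (fun z => by have := hGb z.1 z.2; rw [abs_le]; exact ⟨by linarith [this.1], this.2⟩)
  have hmean : ∫ z, (G z.1 z.2 - e) ∂(mu01.prod mu01) = 0 := by
    rw [integral_sub intG2 (integrable_const e), hGe, integral_const]
    simp [measure_univ]
  -- second moment marginal
  have hsq : ∀ p : Fin ℓ × Fin ℓ, p ∈ S →
      ∫ x, (G (x p.1) (x p.2) - e)^2 ∂π = D := by
    intro p hp
    exact my_integral_pair (hS p hp) (F := fun a b => (G a b - e)^2)
      ((hGm.sub measurable_const).pow_const 2)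
  -- per-term bound
  have hterm : ∀ T ∈ S.powerset.erase ∅,
      |∫ x, (∏ p ∈ T, (G (x p.1) (x p.2) - e)) * e ^ ((S \ T).card) ∂π| ≤ D := by
    intro T hT
    rw [Finset.mem_erase, Finset.mem_powerset] at hT
    obtain ⟨hTne, hTS⟩ := hT
    have hcard : 1 ≤ T.card := Finset.card_pos.mpr (Finset.nonempty_of_ne_empty hTne)
    rcases hcard.eq_or_lt with h1 | h1
    · -- singleton : linear term vanishes
      obtain ⟨p, rfl⟩ := Finset.card_eq_one.mp h1.symm
      have hp : p ∈ S := hTS (Finset.mem_singleton_self p)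
      simp only [Finset.prod_singleton]
      rw [integral_mul_const,
        my_integral_pair (hS p hp) (F := fun a b => G a b - e) (hGm.sub measurable_const),
        hmean, zero_mul, abs_zero]
      exact hDnn
    · -- at least two factors : quadratic bound
      obtain ⟨p, hp, q, hq, hpq⟩ := Finset.one_lt_card.mp h1
      have hpS : p ∈ S := hTS hp
      have hqS : q ∈ S := hTS hq
      have step1 : |∫ x, (∏ r ∈ T, (G (x r.1) (x r.2) - e)) * e ^ ((S \ T).card) ∂π|
          ≤ ∫ x, |(∏ r ∈ T, (G (x r.1) (x r.2) - e)) * e ^ ((S \ T).card)| ∂π := by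
        have := norm_integral_le_integral_norm
          (μ := π) (fun x => (∏ r ∈ T, (G (x r.1) (x r.2) - e)) * e ^ ((S \ T).card))
        simp only [Real.norm_eq_abs] at this
        exact this
      have intRHS : Integrable (fun x : Fin ℓ → ℝ =>
          ((G (x p.1) (x p.2) - e)^2 + (G (x q.1) (x q.2) - e)^2)/2) π := by
        refine integrable_bdd (((((mp p).pow_const 2).add
          ((mp q).pow_const 2)).div_const 2).aestronglyMeasurable) (M := 1) (fun x => ?_)
        have a1 := habs (x p.1) (x p.2)
        have a2 := habs (x q.1) (x q.2)
        rw [abs_le]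
        constructor <;> nlinarith [sq_nonneg (G (x p.1) (x p.2) - e),
          sq_nonneg (G (x q.1) (x q.2) - e), sq_abs (G (x p.1) (x p.2) - e),
          sq_abs (G (x q.1) (x q.2) - e), abs_nonneg (G (x p.1) (x p.2) - e),
          abs_nonneg (G (x q.1) (x q.2) - e)]
      have step2 : ∫ x, |(∏ r ∈ T, (G (x r.1) (x r.2) - e)) * e ^ ((S \ T).card)| ∂π
          ≤ ∫ x, ((G (x p.1) (x p.2) - e)^2 + (G (x q.1) (x q.2) - e)^2)/2 ∂π := by
        refine integral_mono (intT T).abs intRHS (fun x => ?_)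
        set A := |G (x p.1) (x p.2) - e| with hA
        set B := |G (x q.1) (x q.2) - e| with hB
        have h2 : ∏ r ∈ T, |G (x r.1) (x r.2) - e| ≤ A * B := by
          rw [← Finset.mul_prod_erase T _ hp,
            ← Finset.mul_prod_erase _ _ (Finset.mem_erase.mpr ⟨hpq.symm, hq⟩)]
          have hrest : ∏ r ∈ (T.erase p).erase q, |G (x r.1) (x r.2) - e| ≤ 1 :=
            Finset.prod_le_one (fun r _ => abs_nonneg _) (fun r _ => habs _ _)
          calc A * (B * ∏ r ∈ (T.erase p).erase q, |G (x r.1) (x r.2) - e|)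
              ≤ A * (B * 1) := by
                refine mul_le_mul_of_nonneg_left ?_ (abs_nonneg _)
                exact mul_le_mul_of_nonneg_left hrest (abs_nonneg _)
            _ = A * B := by ring
        have h1 : |(∏ r ∈ T, (G (x r.1) (x r.2) - e)) * e ^ ((S \ T).card)|
            ≤ ∏ r ∈ T, |G (x r.1) (x r.2) - e| := by
          rw [abs_mul, Finset.abs_prod, abs_of_nonneg (pow_nonneg he0 _)]
          refine mul_le_of_le_one_right (Finset.prod_nonneg (fun r _ => abs_nonneg _)) ?_
          exact pow_le_one₀ he0 he1
        have h3 : A * B ≤ ((G (x p.1) (x p.2) - e)^2 + (G (x q.1) (x q.2) - e)^2)/2 := by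
          nlinarith [sq_nonneg (A - B), sq_abs (G (x p.1) (x p.2) - e),
            sq_abs (G (x q.1) (x q.2) - e)]
        calc |(∏ r ∈ T, (G (x r.1) (x r.2) - e)) * e ^ ((S \ T).card)|
            ≤ ∏ r ∈ T, |G (x r.1) (x r.2) - e| := h1
          _ ≤ A * B := h2
          _ ≤ _ := h3
      have step3 : ∫ x, ((G (x p.1) (x p.2) - e)^2 + (G (x q.1) (x q.2) - e)^2)/2 ∂π
          = D := by
        have intp : Integrable (fun x : Fin ℓ → ℝ => (G (x p.1) (x p.2) - e)^2) π :=
          integrable_bdd ((mp p).pow_const 2).aestronglyMeasurable (M := 1) (fun x => by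
            have := habs (x p.1) (x p.2)
            rw [abs_le]
            constructor <;> nlinarith [sq_abs (G (x p.1) (x p.2) - e), sq_nonneg
              (G (x p.1) (x p.2) - e), abs_nonneg (G (x p.1) (x p.2) - e)])
        have intq : Integrable (fun x : Fin ℓ → ℝ => (G (x q.1) (x q.2) - e)^2) π :=
          integrable_bdd ((mp q).pow_const 2).aestronglyMeasurable (M := 1) (fun x => by
            have := habs (x q.1) (x q.2)
            rw [abs_le]
            constructor <;> nlinarith [sq_abs (G (x q.1) (x q.2) - e), sq_nonneg
              (G (x q.1) (x q.2) - e), abs_nonneg (G (x q.1) (x q.2) - e)])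
        rw [integral_div, integral_add intp intq, hsq p hpS, hsq q hqS]
        ring
      calc |∫ x, (∏ r ∈ T, (G (x r.1) (x r.2) - e)) * e ^ ((S \ T).card) ∂π|
          ≤ ∫ x, |(∏ r ∈ T, (G (x r.1) (x r.2) - e)) * e ^ ((S \ T).card)| ∂π := step1
        _ ≤ ∫ x, ((G (x p.1) (x p.2) - e)^2 + (G (x q.1) (x q.2) - e)^2)/2 ∂π := step2
        _ = D := step3
  -- binomial expansion
  have hexp : (∫ x, ∏ p ∈ S, G (x p.1) (x p.2) ∂π)
      = ∑ T ∈ S.powerset, ∫ x, (∏ p ∈ T, (G (x p.1) (x p.2) - e)) * e ^ ((S \ T).card) ∂π := by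
    rw [← integral_finset_sum _ (fun T _ => intT T)]
    refine integral_congr_ae (ae_of_all _ (fun x => ?_))
    calc ∏ p ∈ S, G (x p.1) (x p.2)
        = ∏ p ∈ S, ((G (x p.1) (x p.2) - e) + e) := by
          refine Finset.prod_congr rfl (fun p _ => by ring)
      _ = ∑ T ∈ S.powerset, (∏ p ∈ T, (G (x p.1) (x p.2) - e)) * ∏ p ∈ S \ T, e :=
          Finset.prod_add _ _ S
      _ = ∑ T ∈ S.powerset, (∏ p ∈ T, (G (x p.1) (x p.2) - e)) * e ^ ((S \ T).card) := by
          refine Finset.sum_congr rfl (fun T _ => by rw [Finset.prod_const])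
  have hempty : (∫ x, (∏ p ∈ (∅ : Finset (Fin ℓ × Fin ℓ)), (G (x p.1) (x p.2) - e))
      * e ^ ((S \ ∅).card) ∂π) = e ^ k := by
    simp [Finset.prod_empty, Finset.sdiff_empty, hk, measure_univ]
  rw [hexp, ← Finset.add_sum_erase _ _ (Finset.empty_mem_powerset S), hempty,
    add_sub_cancel_left]
  calc |∑ T ∈ S.powerset.erase ∅,
        ∫ x, (∏ p ∈ T, (G (x p.1) (x p.2) - e)) * e ^ ((S \ T).card) ∂π|
      ≤ ∑ T ∈ S.powerset.erase ∅,
        |∫ x, (∏ p ∈ T, (G (x p.1) (x p.2) - e)) * e ^ ((S \ T).card) ∂π| :=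
        Finset.abs_sum_le_sum_abs _ _
    _ ≤ ∑ _T ∈ S.powerset.erase ∅, D := Finset.sum_le_sum hterm
    _ = (S.powerset.erase ∅).card * D := by rw [Finset.sum_const, nsmul_eq_mul]
    _ ≤ 2 ^ k * D := by
        refine mul_le_mul_of_nonneg_right ?_ hDnn
        have : (S.powerset.erase ∅).card ≤ S.powerset.card := Finset.card_erase_le
        rw [Finset.card_powerset, hk] at *
        exact_mod_cast le_trans (Nat.cast_le.mpr this) (by norm_cast)

lemma double_to_prod {F : ℝ → ℝ → ℝ} (hFm : Measurable (Function.uncurry F)) {M : ℝ}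
    (hFb : ∀ x y, |F x y| ≤ M) :
    ∫ x in Icc (0:ℝ) 1, ∫ y in Icc (0:ℝ) 1, F x y = ∫ z, F z.1 z.2 ∂(mu01.prod mu01) := by
  have h : Integrable (Function.uncurry F) (mu01.prod mu01) :=
    integrable_bdd hFm.aestronglyMeasurable (fun z => hFb z.1 z.2)
  exact integral_integral h

/-- A graphon: a measurable function `[0,1]² → [0,1]`, symmetric on `[0,1]²`. -/
def IsGraphon (g : ℝ → ℝ → ℝ) : Prop :=
  Measurable (Function.uncurry g) ∧
  (∀ x ∈ Icc (0:ℝ) 1, ∀ y ∈ Icc (0:ℝ) 1, g x y = g y x) ∧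
  (∀ x ∈ Icc (0:ℝ) 1, ∀ y ∈ Icc (0:ℝ) 1, g x y ∈ Icc (0:ℝ) 1)

/-- Edge density `e(g) = ∫∫ g`. -/
noncomputable def edgeDensity (g : ℝ → ℝ → ℝ) : ℝ :=
  ∫ x in Icc (0:ℝ) 1, ∫ y in Icc (0:ℝ) 1, g x y

/-- Triangle density `t(g) = ∫∫∫ g(x,y) g(y,z) g(z,x)`. -/
noncomputable def triangleDensity (g : ℝ → ℝ → ℝ) : ℝ :=
  ∫ x in Icc (0:ℝ) 1, ∫ y in Icc (0:ℝ) 1, ∫ z in Icc (0:ℝ) 1,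
    g x y * g y z * g z x

/-- Rate function `I(g) = ∫∫ I₀(g(x,y))`. -/
noncomputable def rateFn (g : ℝ → ℝ → ℝ) : ℝ :=
  ∫ x in Icc (0:ℝ) 1, ∫ y in Icc (0:ℝ) 1, I0 (g x y)

/-- Homomorphism density `t(H,g) = ∫_{[0,1]^ℓ} ∏_{{i,j} ∈ E(H)} g(x_i, x_j)`,
where each edge `{i,j}` of `H` appears once as an ordered pair with `i < j`. -/
noncomputable def homDensity (ℓ : ℕ) (H : SimpleGraph (Fin ℓ)) [DecidableRel H.Adj]
    (g : ℝ → ℝ → ℝ) : ℝ :=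
  ∫ x in Set.univ.pi (fun _ : Fin ℓ => Icc (0:ℝ) 1),
    ∏ p ∈ Finset.univ.filter (fun p : Fin ℓ × Fin ℓ => p.1 < p.2 ∧ H.Adj p.1 p.2),
      g (x p.1) (x p.2)

/-- For a finite simple graph `H` with `k ≥ 1` edges and `e ∈ (0,1)` there is
`C > 0` such that every graphon `g` with edge density `e` satisfies
`|t(H,g) - e^k| ≤ C (I(g) - I₀(e))`. -/
theorem homDensity_linear_bound (ℓ : ℕ) (H : SimpleGraph (Fin ℓ))
    [DecidableRel H.Adj] (k : ℕ) (hk : 1 ≤ k)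
    (hkcard : k =
      (Finset.univ.filter (fun p : Fin ℓ × Fin ℓ => p.1 < p.2 ∧ H.Adj p.1 p.2)).card)
    (e : ℝ) (he : e ∈ Ioo (0:ℝ) 1) :
    ∃ C : ℝ, 0 < C ∧ ∀ g : ℝ → ℝ → ℝ, IsGraphon g → edgeDensity g = e →
      |homDensity ℓ H g - e ^ k| ≤ C * (rateFn g - I0 e) := by
  classical
  refine ⟨2 ^ k, by positivity, fun g hg hge => ?_⟩
  obtain ⟨hgm, hgsym, hgb⟩ := hg
  set S : Finset (Fin ℓ × Fin ℓ) :=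
    Finset.univ.filter (fun p : Fin ℓ × Fin ℓ => p.1 < p.2 ∧ H.Adj p.1 p.2) with hSdef
  have hS : ∀ p ∈ S, p.1 ≠ p.2 := by
    intro p hp
    rw [hSdef, Finset.mem_filter] at hp
    exact ne_of_lt hp.2.1
  set G : ℝ → ℝ → ℝ :=
    fun x y => if x ∈ Icc (0:ℝ) 1 ∧ y ∈ Icc (0:ℝ) 1 then g x y else e with hGdef
  have hGm : Measurable (Function.uncurry G) := by
    have hset : MeasurableSet {z : ℝ × ℝ | z.1 ∈ Icc (0:ℝ) 1 ∧ z.2 ∈ Icc (0:ℝ) 1} :=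
      measurableSet_Icc.prod measurableSet_Icc
    exact Measurable.ite hset hgm measurable_const
  have hGb : ∀ x y, G x y ∈ Icc (0:ℝ) 1 := by
    intro x y
    simp only [hGdef]
    split_ifs with h
    · exact hgb x h.1 y h.2
    · exact ⟨he.1.le, he.2.le⟩
  have hGabs : ∀ x y, |G x y| ≤ 1 := fun x y => by
    have := hGb x y; rw [abs_le]; exact ⟨by linarith [this.1], this.2⟩
  -- edge density
  have hEdge : ∫ z, G z.1 z.2 ∂(mu01.prod mu01) = e := by
    rw [← double_to_prod hGm hGabs]
    rw [show (∫ x in Icc (0:ℝ) 1, ∫ y in Icc (0:ℝ) 1, G x y)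
        = ∫ x in Icc (0:ℝ) 1, ∫ y in Icc (0:ℝ) 1, g x y from
      setIntegral_congr_fun measurableSet_Icc (fun x hx =>
        setIntegral_congr_fun measurableSet_Icc (fun y hy => by
          simp only [hGdef]
          rw [if_pos (show x ∈ Icc (0:ℝ) 1 ∧ y ∈ Icc (0:ℝ) 1 from ⟨hx, hy⟩)]))]
    exact hge
  -- rate function
  have hRate : rateFn g = ∫ z, I0 (G z.1 z.2) ∂(mu01.prod mu01) := by
    have hm : Measurable (Function.uncurry fun x y => I0 (G x y)) :=
      continuous_I0.measurable.comp hGm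
    have hb : ∀ x y, |I0 (G x y)| ≤ 1 := fun x y => abs_I0_le (hGb x y)
    rw [← double_to_prod hm hb]
    unfold rateFn
    exact setIntegral_congr_fun measurableSet_Icc (fun x hx =>
      setIntegral_congr_fun measurableSet_Icc (fun y hy => by
        simp only [hGdef]
        rw [if_pos (show x ∈ Icc (0:ℝ) 1 ∧ y ∈ Icc (0:ℝ) 1 from ⟨hx, hy⟩)]))
  -- homomorphism density
  have hHom : homDensity ℓ H g = ∫ x, ∏ p ∈ S, G (x p.1) (x p.2)
      ∂(Measure.pi fun _ : Fin ℓ => mu01) := by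
    unfold homDensity
    rw [setIntegral_congr_fun (MeasurableSet.univ_pi fun _ => measurableSet_Icc)
      (g := fun x : Fin ℓ → ℝ => ∏ p ∈ S, G (x p.1) (x p.2))
      (fun x hx => Finset.prod_congr rfl (fun p _ => by
        simp only [hGdef]
        rw [if_pos (show x p.1 ∈ Icc (0:ℝ) 1 ∧ x p.2 ∈ Icc (0:ℝ) 1 from
          ⟨hx p.1 (mem_univ _), hx p.2 (mem_univ _)⟩)]))]
    rw [show ∫ x in univ.pi (fun _ : Fin ℓ => Icc (0:ℝ) 1), ∏ p ∈ S, G (x p.1) (x p.2)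
        = ∫ x, ∏ p ∈ S, G (x p.1) (x p.2)
          ∂((volume : Measure (Fin ℓ → ℝ)).restrict (univ.pi fun _ => Icc (0:ℝ) 1)) from rfl,
      pi_restrict ℓ]
  have hcount := counting ℓ k S hS hkcard he.1.le he.2.le hGm hGb hEdge
  have hrate := rate_lower he hGm hGb hEdge
  rw [hHom, hRate]
  calc |(∫ x, ∏ p ∈ S, G (x p.1) (x p.2) ∂(Measure.pi fun _ : Fin ℓ => mu01)) - e ^ k|
      ≤ 2 ^ k * ∫ z, (G z.1 z.2 - e)^2 ∂(mu01.prod mu01) := hcount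
    _ ≤ 2 ^ k * ((∫ z, I0 (G z.1 z.2) ∂(mu01.prod mu01)) - I0 e) := by
        refine mul_le_mul_of_nonneg_left hrate (by positivity)
end

section
/- Every graphon g satisfies t(g) ≤ e(g)^{3/2}. -/
open MeasureTheory Set

open scoped ENNReal

namespace TriEdgeAux
open Function

noncomputable def m : Measure ℝ := volume.restrict (Icc (0:ℝ) 1)

lemma m_univ : m univ = 1 := by
  simp [m, Real.volume_Icc]

instance : SFinite m := by unfold m; infer_instance


lemma sq_rpow (x : ℝ≥0∞) : x ^ (2:ℝ) = x * x := by
  rw [show (2:ℝ) = ((2:ℕ):ℝ) by norm_num, ENNReal.rpow_natCast, sq]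

lemma cs {α : Type*} [MeasurableSpace α] (ν : Measure α) {f h : α → ℝ≥0∞}
    (hf : AEMeasurable f ν) (hh : AEMeasurable h ν) :
    ∫⁻ a, f a * h a ∂ν ≤
      (∫⁻ a, f a * f a ∂ν) ^ (2:ℝ)⁻¹ * (∫⁻ a, h a * h a ∂ν) ^ (2:ℝ)⁻¹ := by
  have hpq : Real.HolderConjugate 2 2 := ⟨by norm_num, by norm_num, by norm_num⟩
  have := ENNReal.lintegral_mul_le_Lp_mul_Lq ν hpq hf hh
  simp only [Pi.mul_apply, one_div, sq_rpow] at this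
  exact this

lemma key (G : ℝ → ℝ → ℝ≥0∞) (hG : Measurable (uncurry G)) :
    ∫⁻ x, ∫⁻ y, ∫⁻ z, G x y * G y z * G z x ∂m ∂m ∂m
      ≤ (∫⁻ x, ∫⁻ y, G x y * G x y ∂m ∂m) ^ ((3:ℝ)/2) := by
  set Q := ∫⁻ x, ∫⁻ y, G x y * G x y ∂m ∂m with hQ
  -- measurability tools
  have hG' : Measurable fun p : ℝ × ℝ => G p.1 p.2 := hG
  have hGswap : Measurable fun p : ℝ × ℝ => G p.2 p.1 :=
    hG'.comp measurable_swap
  -- H (y,z) = ∫ x, G x y * G z x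
  set H : ℝ × ℝ → ℝ≥0∞ := fun p => ∫⁻ x, G x p.1 * G p.2 x ∂m with hH
  have hHint : Measurable fun q : (ℝ × ℝ) × ℝ => G q.2 q.1.1 * G q.1.2 q.2 :=
    (hG'.comp (measurable_snd.prodMk (measurable_fst.comp measurable_fst))).mul
      (hG'.comp ((measurable_snd.comp measurable_fst).prodMk measurable_snd))
  have hHmeas : Measurable H := hHint.lintegral_prod_right'
  -- Step A : express triple integral via H on the product measure
  have stepA :
      ∫⁻ x, ∫⁻ y, ∫⁻ z, G x y * G y z * G z x ∂m ∂m ∂m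
        = ∫⁻ p, G p.1 p.2 * H p ∂(m.prod m) := by
    have hmeas3 : Measurable fun q : ℝ × ℝ × ℝ =>
        G q.1 q.2.1 * G q.2.1 q.2.2 * G q.2.2 q.1 :=
      ((hG'.comp (measurable_fst.prodMk (measurable_fst.comp measurable_snd))).mul
        (hG'.comp measurable_snd)).mul
        (hG'.comp ((measurable_snd.comp measurable_snd).prodMk measurable_fst))
    have h1 : ∀ x, (∫⁻ y, ∫⁻ z, G x y * G y z * G z x ∂m ∂m)
        = ∫⁻ p : ℝ × ℝ, G x p.1 * G p.1 p.2 * G p.2 x ∂(m.prod m) := by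
      intro x
      have hm : AEMeasurable (uncurry fun y z => G x y * G y z * G z x) (m.prod m) :=
        (hmeas3.comp measurable_prodMk_left).aemeasurable
      exact lintegral_lintegral hm
    simp_rw [h1]
    have hm2 : AEMeasurable
        (uncurry fun (x : ℝ) (p : ℝ × ℝ) => G x p.1 * G p.1 p.2 * G p.2 x)
        (m.prod (m.prod m)) := hmeas3.aemeasurable
    rw [lintegral_lintegral_swap hm2]
    congr 1
    ext p
    have heq : ∀ x, G x p.1 * G p.1 p.2 * G p.2 x = G p.1 p.2 * (G x p.1 * G p.2 x) := by
      intro x; ring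
    simp_rw [heq]
    have hm3 : Measurable fun x : ℝ => G x p.1 * G p.2 x :=
      (hG'.comp (measurable_id.prodMk measurable_const)).mul
        (hG'.comp (measurable_const.prodMk measurable_id))
    rw [lintegral_const_mul _ hm3]
  -- Step B : Cauchy-Schwarz on the product
  have stepB :
      ∫⁻ p, G p.1 p.2 * H p ∂(m.prod m)
        ≤ Q ^ (2:ℝ)⁻¹ * (∫⁻ p, H p * H p ∂(m.prod m)) ^ (2:ℝ)⁻¹ := by
    have := cs (m.prod m) hG'.aemeasurable hHmeas.aemeasurable
    have hQeq : ∫⁻ p : ℝ × ℝ, G p.1 p.2 * G p.1 p.2 ∂(m.prod m) = Q := by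
      rw [hQ]
      have hm : AEMeasurable (uncurry fun x y => G x y * G x y) (m.prod m) :=
        (hG'.mul hG').aemeasurable
      exact (lintegral_lintegral hm).symm
    rwa [hQeq] at this
  -- Step C+D : ∫ H² ≤ Q * Q
  have stepD : (∫⁻ p, H p * H p ∂(m.prod m)) ≤ Q * Q := by
    set A : ℝ → ℝ≥0∞ := fun y => ∫⁻ x, G x y * G x y ∂m with hA
    set B : ℝ → ℝ≥0∞ := fun z => ∫⁻ x, G z x * G z x ∂m with hB
    have hAmeas : Measurable A :=
      ((hGswap.mul hGswap)).lintegral_prod_right'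
    have hBmeas : Measurable B :=
      ((hG'.mul hG')).lintegral_prod_right'
    have hpt : ∀ p : ℝ × ℝ, H p * H p ≤ A p.1 * B p.2 := by
      intro p
      have h1 : H p ≤ (A p.1) ^ (2:ℝ)⁻¹ * (B p.2) ^ (2:ℝ)⁻¹ :=
        cs m (f := fun x => G x p.1) (h := fun x => G p.2 x)
          ((hG'.comp (measurable_id.prodMk measurable_const)).aemeasurable)
          ((hG'.comp (measurable_const.prodMk measurable_id)).aemeasurable)
      calc H p * H p ≤ ((A p.1) ^ (2:ℝ)⁻¹ * (B p.2) ^ (2:ℝ)⁻¹) *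
            ((A p.1) ^ (2:ℝ)⁻¹ * (B p.2) ^ (2:ℝ)⁻¹) := mul_le_mul' h1 h1
        _ = ((A p.1) ^ (2:ℝ)⁻¹ * (A p.1) ^ (2:ℝ)⁻¹) *
            ((B p.2) ^ (2:ℝ)⁻¹ * (B p.2) ^ (2:ℝ)⁻¹) := by ring
        _ = A p.1 * B p.2 := by
            rw [← ENNReal.rpow_add_of_nonneg _ _ (by norm_num) (by norm_num),
              ← ENNReal.rpow_add_of_nonneg _ _ (by norm_num) (by norm_num)]
            norm_num
    calc ∫⁻ p, H p * H p ∂(m.prod m) ≤ ∫⁻ p, A p.1 * B p.2 ∂(m.prod m) :=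
          lintegral_mono hpt
      _ = (∫⁻ y, A y ∂m) * (∫⁻ z, B z ∂m) :=
          lintegral_prod_mul hAmeas.aemeasurable hBmeas.aemeasurable
      _ = Q * Q := by
          congr 1
          · rw [hQ]
            have hm : AEMeasurable (uncurry fun x y => G x y * G x y) (m.prod m) :=
              (hG'.mul hG').aemeasurable
            exact (lintegral_lintegral_swap hm).symm
  -- combine
  calc ∫⁻ x, ∫⁻ y, ∫⁻ z, G x y * G y z * G z x ∂m ∂m ∂m
      = ∫⁻ p, G p.1 p.2 * H p ∂(m.prod m) := stepA
    _ ≤ Q ^ (2:ℝ)⁻¹ * (∫⁻ p, H p * H p ∂(m.prod m)) ^ (2:ℝ)⁻¹ := stepB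
    _ ≤ Q ^ (2:ℝ)⁻¹ * (Q * Q) ^ (2:ℝ)⁻¹ :=
        mul_le_mul_right (ENNReal.rpow_le_rpow stepD (by norm_num)) _
    _ = Q ^ ((3:ℝ)/2) := by
        rw [ENNReal.mul_rpow_of_nonneg _ _ (by norm_num),
          ← ENNReal.rpow_add_of_nonneg _ _ (by norm_num) (by norm_num),
          ← ENNReal.rpow_add_of_nonneg _ _ (by norm_num) (by norm_num)]
        norm_num



lemma nested2 (f : ℝ → ℝ → ℝ) (hm : Measurable (uncurry f))
    (h0 : ∀ x y, 0 ≤ f x y) (h1 : ∀ x y, f x y ≤ 1) :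
    ∫ x, (∫ y, f x y ∂m) ∂m
      = (∫⁻ x, ∫⁻ y, ENNReal.ofReal (f x y) ∂m ∂m).toReal := by
  have hinner : ∀ x, ∫ y, f x y ∂m = (∫⁻ y, ENNReal.ofReal (f x y) ∂m).toReal := by
    intro x
    have hmx : Measurable fun y => f x y := hm.comp measurable_prodMk_left
    exact integral_eq_lintegral_of_nonneg_ae (ae_of_all _ (h0 x)) hmx.aestronglyMeasurable
  have hFm : Measurable fun x => ∫⁻ y, ENNReal.ofReal (f x y) ∂m :=
    (ENNReal.measurable_ofReal.comp hm).lintegral_prod_right'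
  have hFle : ∀ x, (∫⁻ y, ENNReal.ofReal (f x y) ∂m) ≤ 1 := by
    intro x
    calc ∫⁻ y, ENNReal.ofReal (f x y) ∂m ≤ ∫⁻ _, 1 ∂m :=
          lintegral_mono fun y => ENNReal.ofReal_le_one.2 (h1 x y)
      _ = 1 := by rw [lintegral_one, m_univ]
  simp_rw [hinner]
  exact integral_toReal hFm.aemeasurable
    (ae_of_all _ fun x => lt_of_le_of_lt (hFle x) ENNReal.one_lt_top)

lemma nested3 (f : ℝ → ℝ → ℝ) (hm : Measurable (uncurry f))
    (h0 : ∀ x y, 0 ≤ f x y) (h1 : ∀ x y, f x y ≤ 1) :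
    ∫ x, (∫ y, ∫ z, f x y * f y z * f z x ∂m ∂m) ∂m
      = (∫⁻ x, ∫⁻ y, ∫⁻ z,
          ENNReal.ofReal (f x y * f y z * f z x) ∂m ∂m ∂m).toReal := by
  have hmeas3 : ∀ x, Measurable (uncurry fun y z => f x y * f y z * f z x) := by
    intro x
    exact ((hm.comp (measurable_const.prodMk measurable_fst)).mul hm).mul
      (hm.comp (measurable_snd.prodMk measurable_const))
  have hinner : ∀ x, (∫ y, ∫ z, f x y * f y z * f z x ∂m ∂m)
      = (∫⁻ y, ∫⁻ z, ENNReal.ofReal (f x y * f y z * f z x) ∂m ∂m).toReal := by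
    intro x
    exact nested2 _ (hmeas3 x)
      (fun y z => mul_nonneg (mul_nonneg (h0 x y) (h0 y z)) (h0 z x))
      (fun y z => mul_le_one₀ (mul_le_one₀ (h1 x y) (h0 y z) (h1 y z))
        (h0 z x) (h1 z x))
  have hGm : Measurable fun q : ℝ × ℝ × ℝ =>
      ENNReal.ofReal (f q.1 q.2.1 * f q.2.1 q.2.2 * f q.2.2 q.1) := by
    apply ENNReal.measurable_ofReal.comp
    exact ((hm.comp (measurable_fst.prodMk (measurable_fst.comp measurable_snd))).mul
      (hm.comp measurable_snd)).mul
      (hm.comp ((measurable_snd.comp measurable_snd).prodMk measurable_fst))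
  have hFrw : ∀ x, (∫⁻ y, ∫⁻ z, ENNReal.ofReal (f x y * f y z * f z x) ∂m ∂m)
      = ∫⁻ p : ℝ × ℝ, ENNReal.ofReal (f x p.1 * f p.1 p.2 * f p.2 x) ∂(m.prod m) := by
    intro x
    have h : AEMeasurable
        (uncurry fun y z => ENNReal.ofReal (f x y * f y z * f z x)) (m.prod m) :=
      (hGm.comp measurable_prodMk_left).aemeasurable
    exact lintegral_lintegral h
  have hFm : Measurable fun x =>
      ∫⁻ p : ℝ × ℝ, ENNReal.ofReal (f x p.1 * f p.1 p.2 * f p.2 x) ∂(m.prod m) := by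
    have : Measurable fun q : ℝ × (ℝ × ℝ) =>
        ENNReal.ofReal (f q.1 q.2.1 * f q.2.1 q.2.2 * f q.2.2 q.1) := hGm
    exact this.lintegral_prod_right'
  have hFle : ∀ x,
      (∫⁻ p : ℝ × ℝ, ENNReal.ofReal (f x p.1 * f p.1 p.2 * f p.2 x) ∂(m.prod m)) ≤ 1 := by
    intro x
    calc _ ≤ ∫⁻ _ : ℝ × ℝ, 1 ∂(m.prod m) := by
          apply lintegral_mono
          intro p
          exact ENNReal.ofReal_le_one.2 (mul_le_one₀ (mul_le_one₀ (h1 x p.1)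
            (h0 p.1 p.2) (h1 p.1 p.2)) (h0 p.2 x) (h1 p.2 x))
      _ = 1 := by
          rw [lintegral_one,
            show (univ : Set (ℝ × ℝ)) = univ ×ˢ univ from univ_prod_univ.symm,
            Measure.prod_prod, m_univ, mul_one]
  simp_rw [hinner, hFrw]
  rw [integral_toReal hFm.aemeasurable
    (ae_of_all _ fun x => lt_of_le_of_lt (hFle x) ENNReal.one_lt_top)]


end TriEdgeAux

open TriEdgeAux in
/-- Every graphon satisfies `t(g) ≤ e(g)^{3/2}`. -/
theorem triangle_le_edge_pow (g : ℝ → ℝ → ℝ) (hg : IsGraphon g) :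
    triangleDensity g ≤ (edgeDensity g) ^ ((3:ℝ)/2) := by
  obtain ⟨hmeas, hsymm, hbound⟩ := hg
  set f : ℝ → ℝ → ℝ := fun x y => max 0 (min (g x y) 1) with hfdef
  have hfm : Measurable (Function.uncurry f) :=
    measurable_const.max (hmeas.min measurable_const)
  have h0 : ∀ x y, 0 ≤ f x y := fun x y => le_max_left _ _
  have h1 : ∀ x y, f x y ≤ 1 := fun x y => max_le zero_le_one (min_le_right _ _)
  have hfeq : ∀ x ∈ Icc (0:ℝ) 1, ∀ y ∈ Icc (0:ℝ) 1, f x y = g x y := by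
    intro x hx y hy
    have h := hbound x hx y hy
    show max 0 (min (g x y) 1) = g x y
    rw [min_eq_left h.2, max_eq_right h.1]
  set G : ℝ → ℝ → ℝ≥0∞ := fun x y => ENNReal.ofReal (f x y) with hGdef
  have hGm : Measurable (Function.uncurry G) :=
    ENNReal.measurable_ofReal.comp hfm
  have hG1 : ∀ x y, G x y ≤ 1 := fun x y => ENNReal.ofReal_le_one.2 (h1 x y)
  have hofReal : ∀ x y z,
      ENNReal.ofReal (f x y * f y z * f z x) = G x y * G y z * G z x := by
    intro x y z
    rw [ENNReal.ofReal_mul (mul_nonneg (h0 x y) (h0 y z)),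
      ENNReal.ofReal_mul (h0 x y)]
  set E := ∫⁻ x, ∫⁻ y, G x y ∂m ∂m with hEdef
  have hE1 : E ≤ 1 := by
    rw [hEdef]
    calc ∫⁻ x, ∫⁻ y, G x y ∂m ∂m ≤ ∫⁻ _, 1 ∂m := by
          apply lintegral_mono
          intro x
          calc ∫⁻ y, G x y ∂m ≤ ∫⁻ _, 1 ∂m := lintegral_mono fun y => hG1 x y
            _ = 1 := by rw [lintegral_one, m_univ]
      _ = 1 := by rw [lintegral_one, m_univ]
  have hEtop : E ≠ ⊤ := (lt_of_le_of_lt hE1 ENNReal.one_lt_top).ne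
  have hQE : (∫⁻ x, ∫⁻ y, G x y * G x y ∂m ∂m) ≤ E := by
    rw [hEdef]
    refine lintegral_mono fun x => lintegral_mono fun y => ?_
    calc G x y * G x y ≤ 1 * G x y := mul_le_mul_left (hG1 x y) _
      _ = G x y := one_mul _
  -- identify densities
  have htri : triangleDensity g
      = (∫⁻ x, ∫⁻ y, ∫⁻ z, G x y * G y z * G z x ∂m ∂m ∂m).toReal := by
    have h1' : triangleDensity g
        = ∫ x, (∫ y, ∫ z, f x y * f y z * f z x ∂m ∂m) ∂m := by
      refine setIntegral_congr_fun measurableSet_Icc fun x hx => ?_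
      refine setIntegral_congr_fun measurableSet_Icc fun y hy => ?_
      refine setIntegral_congr_fun measurableSet_Icc fun z hz => ?_
      rw [hfeq x hx y hy, hfeq y hy z hz, hfeq z hz x hx]
    rw [h1', nested3 f hfm h0 h1]
    simp_rw [hofReal]
  have hedge : edgeDensity g = E.toReal := by
    have h1' : edgeDensity g = ∫ x, (∫ y, f x y ∂m) ∂m := by
      refine setIntegral_congr_fun measurableSet_Icc fun x hx => ?_
      refine setIntegral_congr_fun measurableSet_Icc fun y hy => ?_
      exact (hfeq x hx y hy).symm
    rw [h1', nested2 f hfm h0 h1, hEdef]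
  rw [htri, hedge]
  have hT : (∫⁻ x, ∫⁻ y, ∫⁻ z, G x y * G y z * G z x ∂m ∂m ∂m)
      ≤ E ^ ((3:ℝ)/2) :=
    (key G hGm).trans (ENNReal.rpow_le_rpow hQE (by norm_num))
  have hEp : E ^ ((3:ℝ)/2) ≠ ⊤ :=
    ENNReal.rpow_ne_top_of_nonneg (by norm_num) hEtop
  calc (∫⁻ x, ∫⁻ y, ∫⁻ z, G x y * G y z * G z x ∂m ∂m ∂m).toReal
      ≤ (E ^ ((3:ℝ)/2)).toReal := ENNReal.toReal_mono hEp hT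
    _ = E.toReal ^ ((3:ℝ)/2) := (ENNReal.toReal_rpow _ _).symm
end

section
/- Let g be a graphon with t(g) = e(g)^{3/2}. Then there exists a measurable set A ⊆ [0,1] with Lebesgue measure λ(A) = √(e(g)) such that g(x,y) = 1_A(x)·1_A(y) for almost every (x,y) ∈ [0,1]². (Equivalently, up to a measure-preserving transformation of [0,1], g is the indicator of the square [0,√(e(g))]², so each point on the upper boundary t = e^{3/2} of the achievable region is realized by a unique reduced graphon.) -/
open MeasureTheory Set

section csaux
variable {α : Type*} [MeasurableSpace α] {μ : Measure α}

lemma integrable_of_ae_bdd [IsFiniteMeasure μ] {f : α → ℝ} (hm : AEStronglyMeasurable f μ)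
    {C : ℝ} (h : ∀ᵐ x ∂μ, |f x| ≤ C) : Integrable f μ :=
  ⟨hm, HasFiniteIntegral.of_bounded (C := C) (by filter_upwards [h] with x hx; simpa using hx)⟩

lemma cs_integral {f w : α → ℝ} (hf : AEStronglyMeasurable f μ) (hw : AEStronglyMeasurable w μ)
    (hf2 : Integrable (fun x => f x ^ 2) μ) (hw2 : Integrable (fun x => w x ^ 2) μ) :
    (∫ x, f x * w x ∂μ) ^ 2 ≤ (∫ x, f x ^ 2 ∂μ) * (∫ x, w x ^ 2 ∂μ) := by
  have hfw : Integrable (fun x => f x * w x) μ := by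
    refine Integrable.mono' ((hf2.add hw2).div_const 2) (hf.mul hw) ?_
    filter_upwards with x
    simp only [Pi.add_apply]
    rw [Real.norm_eq_abs, abs_mul]
    nlinarith [sq_abs (f x), sq_abs (w x), sq_nonneg (|f x| - |w x|)]
  set a := ∫ x, f x ^ 2 ∂μ with ha_def
  set b := ∫ x, w x ^ 2 ∂μ with hb_def
  set c := ∫ x, f x * w x ∂μ with hc_def
  have ha : 0 ≤ a := integral_nonneg fun x => sq_nonneg _
  have hb : 0 ≤ b := integral_nonneg fun x => sq_nonneg _
  rcases eq_or_lt_of_le hb with hb0 | hbpos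
  · have hw0 : (fun x => w x ^ 2) =ᵐ[μ] 0 :=
      (integral_eq_zero_iff_of_nonneg_ae (Filter.Eventually.of_forall fun x => sq_nonneg _)
        hw2).1 hb0.symm
    have hfw0 : (fun x => f x * w x) =ᵐ[μ] 0 := by
      filter_upwards [hw0] with x hx
      have hx' : w x = 0 := by
        have : w x ^ 2 = 0 := hx
        nlinarith
      simp [hx']
    have hc : c = 0 := by rw [hc_def, integral_congr_ae hfw0]; simp
    nlinarith
  · have hexp : ∫ x, (b * f x - c * w x) ^ 2 ∂μ = b ^ 2 * a - 2 * b * c * c + c ^ 2 * b := by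
      have : ∀ x, (b * f x - c * w x) ^ 2
          = (b ^ 2 * f x ^ 2 - 2 * b * c * (f x * w x)) + c ^ 2 * w x ^ 2 := by
        intro x; ring
      simp_rw [this]
      have h1 : Integrable (fun x => b ^ 2 * f x ^ 2 - 2 * b * c * (f x * w x)) μ := by
        exact (hf2.const_mul (b^2)).sub (hfw.const_mul (2*b*c))
      have h2 : Integrable (fun x => c ^ 2 * w x ^ 2) μ := hw2.const_mul (c^2)
      rw [integral_add h1 h2, integral_sub (hf2.const_mul (b^2)) (hfw.const_mul (2*b*c)),
        integral_const_mul, integral_const_mul, integral_const_mul]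
    have h0 : 0 ≤ ∫ x, (b * f x - c * w x) ^ 2 ∂μ := integral_nonneg fun x => sq_nonneg _
    nlinarith

end csaux

/-- restriction of Lebesgue measure to `[0,1]`. -/
noncomputable def m01 : Measure ℝ := volume.restrict (Icc (0:ℝ) 1)

instance : IsProbabilityMeasure m01 :=
  ⟨by simp [m01, Measure.restrict_apply_univ, Real.volume_Icc]⟩

/-- degree function -/
noncomputable def gdeg (g : ℝ → ℝ → ℝ) (x : ℝ) : ℝ := ∫ y, g x y ∂m01

/-- codegree kernel -/
noncomputable def gW (g : ℝ → ℝ → ℝ) (p : ℝ × ℝ) : ℝ := ∫ z, g p.1 z * g p.2 z ∂m01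

lemma gdeg_meas {g : ℝ → ℝ → ℝ} (hmeas : Measurable (Function.uncurry g)) :
    Measurable (gdeg g) :=
  (hmeas.stronglyMeasurable.integral_prod_right').measurable

lemma gW_meas {g : ℝ → ℝ → ℝ} (hmeas : Measurable (Function.uncurry g)) :
    Measurable (gW g) := by
  have hF : Measurable (fun q : (ℝ × ℝ) × ℝ => g q.1.1 q.2 * g q.1.2 q.2) := by
    exact (hmeas.comp (measurable_fst.fst.prodMk measurable_snd)).mul
      (hmeas.comp (measurable_fst.snd.prodMk measurable_snd))
  exact (hF.stronglyMeasurable.integral_prod_right').measurable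

set_option maxHeartbeats 2000000 in
/-- If `t(g) = e(g)^{3/2}` then `g` is a.e. the indicator `1_A(x) 1_A(y)` of a
square, where `A ⊆ [0,1]` has measure `√(e(g))`. -/
theorem upper_boundary_maximizer (g : ℝ → ℝ → ℝ) (hg : IsGraphon g)
    (ht : triangleDensity g = (edgeDensity g) ^ ((3:ℝ)/2)) :
    ∃ A : Set ℝ, MeasurableSet A ∧ A ⊆ Icc (0:ℝ) 1 ∧
      volume A = ENNReal.ofReal (Real.sqrt (edgeDensity g)) ∧
      ∀ᵐ p : ℝ × ℝ ∂(volume.restrict (Icc (0:ℝ) 1 ×ˢ Icc (0:ℝ) 1)),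
        g p.1 p.2 =
          A.indicator (fun _ => (1:ℝ)) p.1 * A.indicator (fun _ => (1:ℝ)) p.2 := by
  obtain ⟨hmeas, hsymm, hrange⟩ := hg
  have hπ : volume.restrict ((Icc (0:ℝ) 1) ×ˢ (Icc (0:ℝ) 1)) = m01.prod m01 := by
    rw [show m01 = volume.restrict (Icc (0:ℝ) 1) from rfl, Measure.prod_restrict]
    rfl
  have hmem1 : ∀ᵐ x ∂m01, x ∈ Icc (0:ℝ) 1 := ae_restrict_mem measurableSet_Icc
  have hmem2 : ∀ᵐ p : ℝ × ℝ ∂(m01.prod m01), p.1 ∈ Icc (0:ℝ) 1 ∧ p.2 ∈ Icc (0:ℝ) 1 := by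
    rw [← hπ]
    filter_upwards [ae_restrict_mem (measurableSet_Icc.prod measurableSet_Icc)] with p hp
    exact hp
  -- sections
  have hsec : ∀ x : ℝ, Measurable fun y => g x y := fun x => hmeas.of_uncurry_left
  have hsecInt : ∀ x ∈ Icc (0:ℝ) 1, Integrable (fun y => g x y) m01 := by
    intro x hx
    refine integrable_of_ae_bdd (hsec x).aestronglyMeasurable (C := 1) ?_
    filter_upwards [hmem1] with y hy
    obtain ⟨h0, h1⟩ := hrange x hx y hy
    rw [abs_le]; constructor <;> linarith
  have hsec2Int : ∀ x ∈ Icc (0:ℝ) 1, Integrable (fun y => g x y ^ 2) m01 := by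
    intro x hx
    refine integrable_of_ae_bdd ((hsec x).pow_const 2).aestronglyMeasurable (C := 1) ?_
    filter_upwards [hmem1] with y hy
    obtain ⟨h0, h1⟩ := hrange x hx y hy
    rw [abs_le]; constructor <;> nlinarith
  -- degree bounds
  have hd0 : ∀ x ∈ Icc (0:ℝ) 1, 0 ≤ gdeg g x := by
    intro x hx
    refine integral_nonneg_of_ae ?_
    filter_upwards [hmem1] with y hy
    exact (hrange x hx y hy).1
  have hd1 : ∀ x ∈ Icc (0:ℝ) 1, gdeg g x ≤ 1 := by
    intro x hx
    have : gdeg g x ≤ ∫ _, (1:ℝ) ∂m01 := by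
      refine integral_mono_ae (hsecInt x hx) (integrable_const 1) ?_
      filter_upwards [hmem1] with y hy
      exact (hrange x hx y hy).2
    simpa using this
  -- second moment of sections bounded by degree
  have hsec2_le : ∀ x ∈ Icc (0:ℝ) 1, ∫ y, g x y ^ 2 ∂m01 ≤ gdeg g x := by
    intro x hx
    refine integral_mono_ae (hsec2Int x hx) (hsecInt x hx) ?_
    filter_upwards [hmem1] with y hy
    obtain ⟨h0, h1⟩ := hrange x hx y hy
    nlinarith
  have hsec2_nonneg : ∀ x : ℝ, 0 ≤ ∫ y, g x y ^ 2 ∂m01 :=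
    fun x => integral_nonneg fun y => sq_nonneg _
  -- W bounds
  have hW_nonneg : ∀ p : ℝ × ℝ, p.1 ∈ Icc (0:ℝ) 1 → p.2 ∈ Icc (0:ℝ) 1 → 0 ≤ gW g p := by
    intro p h1 h2
    refine integral_nonneg_of_ae ?_
    filter_upwards [hmem1] with z hz
    exact mul_nonneg (hrange p.1 h1 z hz).1 (hrange p.2 h2 z hz).1
  have hW_le : ∀ p : ℝ × ℝ, p.1 ∈ Icc (0:ℝ) 1 → p.2 ∈ Icc (0:ℝ) 1 → gW g p ≤ 1 := by
    intro p h1 h2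
    have hint : Integrable (fun z => g p.1 z * g p.2 z) m01 := by
      refine integrable_of_ae_bdd ((hsec p.1).mul (hsec p.2)).aestronglyMeasurable (C := 1) ?_
      filter_upwards [hmem1] with z hz
      obtain ⟨a0, a1⟩ := hrange p.1 h1 z hz
      obtain ⟨b0, b1⟩ := hrange p.2 h2 z hz
      rw [abs_le]; constructor <;> nlinarith
    have : gW g p ≤ ∫ _, (1:ℝ) ∂m01 := by
      refine integral_mono_ae hint (integrable_const 1) ?_
      filter_upwards [hmem1] with z hz
      obtain ⟨a0, a1⟩ := hrange p.1 h1 z hz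
      obtain ⟨b0, b1⟩ := hrange p.2 h2 z hz
      nlinarith
    simpa using this
  -- pointwise Cauchy-Schwarz: W(p)^2 ≤ d(p.1) d(p.2)
  have hWd : ∀ p : ℝ × ℝ, p.1 ∈ Icc (0:ℝ) 1 → p.2 ∈ Icc (0:ℝ) 1 →
      gW g p ^ 2 ≤ gdeg g p.1 * gdeg g p.2 := by
    intro p h1 h2
    have hcs := cs_integral (μ := m01) (hsec p.1).aestronglyMeasurable
      (hsec p.2).aestronglyMeasurable (hsec2Int p.1 h1) (hsec2Int p.2 h2)
    refine le_trans hcs ?_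
    exact mul_le_mul (hsec2_le p.1 h1) (hsec2_le p.2 h2) (hsec2_nonneg p.2) (hd0 p.1 h1)
  -- global integrability on the product
  have hGsm : AEStronglyMeasurable (fun p : ℝ × ℝ => g p.1 p.2) (m01.prod m01) :=
    hmeas.aestronglyMeasurable
  have hGint : Integrable (fun p : ℝ × ℝ => g p.1 p.2) (m01.prod m01) := by
    refine integrable_of_ae_bdd hGsm (C := 1) ?_
    filter_upwards [hmem2] with p hp
    obtain ⟨h0, h1⟩ := hrange p.1 hp.1 p.2 hp.2
    rw [abs_le]; constructor <;> linarith
  have hGm : Measurable (fun p : ℝ × ℝ => g p.1 p.2) := hmeas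
  have hbd01 : ∀ {h : ℝ × ℝ → ℝ}, Measurable h →
      (∀ p : ℝ × ℝ, p.1 ∈ Icc (0:ℝ) 1 → p.2 ∈ Icc (0:ℝ) 1 → 0 ≤ h p ∧ h p ≤ 1) →
      Integrable h (m01.prod m01) := by
    intro h hm hb
    refine integrable_of_ae_bdd hm.aestronglyMeasurable (C := 1) ?_
    filter_upwards [hmem2] with p hp
    obtain ⟨h0, h1⟩ := hb p hp.1 hp.2
    rw [abs_le]; constructor <;> linarith
  have hprg : ∀ p : ℝ × ℝ, p.1 ∈ Icc (0:ℝ) 1 → p.2 ∈ Icc (0:ℝ) 1 →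
      0 ≤ g p.1 p.2 ∧ g p.1 p.2 ≤ 1 := fun p h1 h2 => hrange p.1 h1 p.2 h2
  have hWm : Measurable (gW g) := gW_meas hmeas
  have hdm : Measurable (gdeg g) := gdeg_meas hmeas
  have hG2int : Integrable (fun p : ℝ × ℝ => g p.1 p.2 ^ 2) (m01.prod m01) :=
    hbd01 (hGm.pow_const 2) (fun p h1 h2 => by
      obtain ⟨a0, a1⟩ := hprg p h1 h2; constructor <;> nlinarith)
  have hWint : Integrable (gW g) (m01.prod m01) :=
    hbd01 hWm (fun p h1 h2 => ⟨hW_nonneg p h1 h2, hW_le p h1 h2⟩)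
  have hW2int : Integrable (fun p : ℝ × ℝ => gW g p ^ 2) (m01.prod m01) :=
    hbd01 (hWm.pow_const 2) (fun p h1 h2 => by
      have := hW_nonneg p h1 h2; have := hW_le p h1 h2; constructor <;> nlinarith)
  have hGWint : Integrable (fun p : ℝ × ℝ => g p.1 p.2 * gW g p) (m01.prod m01) :=
    hbd01 (hGm.mul hWm) (fun p h1 h2 => by
      obtain ⟨a0, a1⟩ := hprg p h1 h2
      have := hW_nonneg p h1 h2; have := hW_le p h1 h2
      constructor <;> nlinarith)
  have hddint : Integrable (fun p : ℝ × ℝ => gdeg g p.1 * gdeg g p.2) (m01.prod m01) :=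
    hbd01 ((hdm.comp measurable_fst).mul (hdm.comp measurable_snd)) (fun p h1 h2 => by
      have a0 := hd0 p.1 h1; have a1 := hd1 p.1 h1
      have b0 := hd0 p.2 h2; have b1 := hd1 p.2 h2
      constructor <;> nlinarith)
  -- edge density as a product integral
  have he2 : edgeDensity g = ∫ p, g p.1 p.2 ∂(m01.prod m01) := by
    rw [show edgeDensity g = ∫ x, ∫ y, g x y ∂m01 ∂m01 from rfl]
    exact integral_integral hGint
  have he_nonneg : 0 ≤ edgeDensity g := by
    rw [he2]
    refine integral_nonneg_of_ae ?_
    filter_upwards [hmem2] with p hp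
    exact (hprg p hp.1 hp.2).1
  have hIdeg : ∫ x, gdeg g x ∂m01 = edgeDensity g := rfl
  -- triangle density identity
  have hstep1 : triangleDensity g = ∫ p, g p.1 p.2 * gW g p ∂(m01.prod m01) := by
    have inner : ∀ x ∈ Icc (0:ℝ) 1,
        (∫ y, (∫ z, g x y * g y z * g z x ∂m01) ∂m01) = ∫ y, g x y * gW g (x, y) ∂m01 := by
      intro x hx
      refine integral_congr_ae ?_
      filter_upwards [hmem1] with y hy
      have hz : ∀ᵐ z ∂m01, g x y * g y z * g z x = g x y * (g x z * g y z) := by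
        filter_upwards [hmem1] with z hz
        rw [hsymm z hz x hx]; ring
      rw [integral_congr_ae hz, integral_const_mul]
      rfl
    have h2 : triangleDensity g = ∫ x, (∫ y, g x y * gW g (x, y) ∂m01) ∂m01 := by
      rw [show triangleDensity g
          = ∫ x, ∫ y, ∫ z, g x y * g y z * g z x ∂m01 ∂m01 ∂m01 from rfl]
      refine integral_congr_ae ?_
      filter_upwards [hmem1] with x hx
      exact inner x hx
    rw [h2]
    exact integral_integral hGWint
  -- bounds
  have ha_le : ∫ p, g p.1 p.2 ^ 2 ∂(m01.prod m01) ≤ edgeDensity g := by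
    rw [he2]
    refine integral_mono_ae hG2int hGint ?_
    filter_upwards [hmem2] with p hp
    obtain ⟨a0, a1⟩ := hprg p hp.1 hp.2
    nlinarith
  have hdd_eq : ∫ p, gdeg g p.1 * gdeg g p.2 ∂(m01.prod m01)
      = edgeDensity g * edgeDensity g := by
    rw [integral_prod_mul (gdeg g) (gdeg g), hIdeg]
  have hb_le : ∫ p, gW g p ^ 2 ∂(m01.prod m01) ≤ edgeDensity g * edgeDensity g := by
    rw [← hdd_eq]
    refine integral_mono_ae hW2int hddint ?_
    filter_upwards [hmem2] with p hp
    exact hWd p hp.1 hp.2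
  have ha0 : 0 ≤ ∫ p, g p.1 p.2 ^ 2 ∂(m01.prod m01) := integral_nonneg fun p => sq_nonneg _
  have hb0 : 0 ≤ ∫ p, gW g p ^ 2 ∂(m01.prod m01) := integral_nonneg fun p => sq_nonneg _
  have hcs := cs_integral hGsm (hWm.aestronglyMeasurable) hG2int hW2int
  -- case split on e = 0
  rcases eq_or_lt_of_le he_nonneg with he0 | hepos
  · -- degenerate case : e = 0, g = 0 a.e.
    have hGnn : 0 ≤ᵐ[m01.prod m01] fun p : ℝ × ℝ => g p.1 p.2 := by
      filter_upwards [hmem2] with p hp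
      exact (hprg p hp.1 hp.2).1
    have hG0 : (fun p : ℝ × ℝ => g p.1 p.2) =ᵐ[m01.prod m01] 0 :=
      (integral_eq_zero_iff_of_nonneg_ae hGnn hGint).1 (by rw [← he2, ← he0])
    refine ⟨∅, MeasurableSet.empty, empty_subset _, by simp [← he0], ?_⟩
    rw [hπ]
    filter_upwards [hG0] with p hp
    simp only [Pi.zero_apply] at hp
    simp [hp]
  · -- main case : e > 0
    set e := edgeDensity g with he_def
    set s := Real.sqrt e with hs_def
    have hs2 : s ^ 2 = e := Real.sq_sqrt he_nonneg
    have hspos : 0 < s := Real.sqrt_pos.mpr hepos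
    have ht' : triangleDensity g = e * s := by
      rw [ht, show (3:ℝ)/2 = 1 + 1/2 by norm_num, Real.rpow_add hepos, Real.rpow_one,
        ← Real.sqrt_eq_rpow]
    -- equality forcing
    have key : e * e * e ≤ (∫ p, g p.1 p.2 ^ 2 ∂(m01.prod m01)) * ∫ p, gW g p ^ 2 ∂(m01.prod m01) := by
      have h1 : ∫ p, g p.1 p.2 * gW g p ∂(m01.prod m01) = e * s := by
        rw [← hstep1, ht']
      rw [h1] at hcs
      nlinarith [hcs, hs2]
    have haeq : ∫ p, g p.1 p.2 ^ 2 ∂(m01.prod m01) = e := by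
      refine le_antisymm ha_le ?_
      have h2 : e * e * e ≤ (∫ p, g p.1 p.2 ^ 2 ∂(m01.prod m01)) * (e * e) :=
        key.trans (mul_le_mul_of_nonneg_left hb_le ha0)
      nlinarith [mul_pos hepos hepos]
    have hbeq : ∫ p, gW g p ^ 2 ∂(m01.prod m01) = e * e := by
      refine le_antisymm hb_le ?_
      have h2 : e * e * e ≤ e * ∫ p, gW g p ^ 2 ∂(m01.prod m01) :=
        key.trans (mul_le_mul_of_nonneg_right ha_le hb0)
      nlinarith [hepos]
    -- W² = d⊗d a.e., hence W = φ⊗φ a.e. with φ = √d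
    have hsubint : Integrable
        (fun p : ℝ × ℝ => gdeg g p.1 * gdeg g p.2 - gW g p ^ 2) (m01.prod m01) := by
      exact hddint.sub hW2int
    have hsub0 : ∫ p, (gdeg g p.1 * gdeg g p.2 - gW g p ^ 2) ∂(m01.prod m01) = 0 := by
      rw [integral_sub hddint hW2int, hdd_eq, hbeq, sub_self]
    have hsubnn : 0 ≤ᵐ[m01.prod m01]
        fun p : ℝ × ℝ => gdeg g p.1 * gdeg g p.2 - gW g p ^ 2 := by
      filter_upwards [hmem2] with p hp
      have := hWd p hp.1 hp.2
      simp only [Pi.zero_apply]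
      linarith
    have hW2dd : ∀ᵐ p ∂(m01.prod m01), gW g p ^ 2 = gdeg g p.1 * gdeg g p.2 := by
      have h0 := (integral_eq_zero_iff_of_nonneg_ae hsubnn hsubint).1 hsub0
      filter_upwards [h0] with p hp
      simp only [Pi.zero_apply] at hp
      linarith
    have hWphi : ∀ᵐ p ∂(m01.prod m01),
        gW g p = Real.sqrt (gdeg g p.1) * Real.sqrt (gdeg g p.2) := by
      filter_upwards [hW2dd, hmem2] with p h1 h2
      have h3 : 0 ≤ gW g p := hW_nonneg p h2.1 h2.2
      have h4 : Real.sqrt (gW g p ^ 2) = Real.sqrt (gdeg g p.1 * gdeg g p.2) := by rw [h1]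
      rwa [Real.sqrt_sq h3, Real.sqrt_mul (hd0 p.1 h2.1)] at h4
    -- φ facts
    have hφm : Measurable fun x => Real.sqrt (gdeg g x) :=
      Real.continuous_sqrt.measurable.comp hdm
    have hφ01 : ∀ x ∈ Icc (0:ℝ) 1,
        0 ≤ Real.sqrt (gdeg g x) ∧ Real.sqrt (gdeg g x) ≤ 1 := by
      intro x hx
      exact ⟨Real.sqrt_nonneg _, Real.sqrt_le_one.mpr (hd1 x hx)⟩
    have hφ2 : ∫ x, Real.sqrt (gdeg g x) ^ 2 ∂m01 = e := by
      rw [← hIdeg]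
      refine integral_congr_ae ?_
      filter_upwards [hmem1] with x hx
      exact Real.sq_sqrt (hd0 x hx)
    have hGφint : Integrable
        (fun p : ℝ × ℝ => g p.1 p.2 * (Real.sqrt (gdeg g p.1) * Real.sqrt (gdeg g p.2)))
        (m01.prod m01) := by
      refine hbd01 (hGm.mul ((hφm.comp measurable_fst).mul (hφm.comp measurable_snd))) ?_
      intro p h1 h2
      obtain ⟨a0, a1⟩ := hprg p h1 h2
      obtain ⟨b0, b1⟩ := hφ01 p.1 h1
      obtain ⟨c0, c1⟩ := hφ01 p.2 h2
      have hbc0 : 0 ≤ Real.sqrt (gdeg g p.1) * Real.sqrt (gdeg g p.2) := mul_nonneg b0 c0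
      have hbc1 : Real.sqrt (gdeg g p.1) * Real.sqrt (gdeg g p.2) ≤ 1 := by nlinarith
      constructor
      · positivity
      · nlinarith
    have hφφ2int : Integrable
        (fun p : ℝ × ℝ => (Real.sqrt (gdeg g p.1) * Real.sqrt (gdeg g p.2)) ^ 2)
        (m01.prod m01) := by
      refine hbd01 (((hφm.comp measurable_fst).mul (hφm.comp measurable_snd)).pow_const 2) ?_
      intro p h1 h2
      obtain ⟨b0, b1⟩ := hφ01 p.1 h1
      obtain ⟨c0, c1⟩ := hφ01 p.2 h2
      have hbc0 : 0 ≤ Real.sqrt (gdeg g p.1) * Real.sqrt (gdeg g p.2) := mul_nonneg b0 c0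
      have hbc1 : Real.sqrt (gdeg g p.1) * Real.sqrt (gdeg g p.2) ≤ 1 := by nlinarith
      constructor
      · positivity
      · nlinarith
    have hφφsq : ∫ p, (Real.sqrt (gdeg g p.1) * Real.sqrt (gdeg g p.2)) ^ 2 ∂(m01.prod m01)
        = e * e := by
      have : ∀ p : ℝ × ℝ, (Real.sqrt (gdeg g p.1) * Real.sqrt (gdeg g p.2)) ^ 2
          = Real.sqrt (gdeg g p.1) ^ 2 * Real.sqrt (gdeg g p.2) ^ 2 := by
        intro p; ring
      simp_rw [this]
      rw [integral_prod_mul (fun x => Real.sqrt (gdeg g x) ^ 2)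
        (fun x => Real.sqrt (gdeg g x) ^ 2), hφ2]
    have hGφ : ∫ p, g p.1 p.2 * (Real.sqrt (gdeg g p.1) * Real.sqrt (gdeg g p.2))
        ∂(m01.prod m01) = e * s := by
      rw [← ht', hstep1]
      refine integral_congr_ae ?_
      filter_upwards [hWphi] with p hp
      rw [hp]
    -- the rank-one expansion
    have hsne : s ≠ 0 := ne_of_gt hspos
    have hsq_exp : ∀ p : ℝ × ℝ,
        (g p.1 p.2 - (1/s) * (Real.sqrt (gdeg g p.1) * Real.sqrt (gdeg g p.2))) ^ 2
        = (g p.1 p.2 ^ 2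
            - (2/s) * (g p.1 p.2 * (Real.sqrt (gdeg g p.1) * Real.sqrt (gdeg g p.2))))
          + (1/s)^2 * (Real.sqrt (gdeg g p.1) * Real.sqrt (gdeg g p.2))^2 := by
      intro p; ring
    have hint1 : Integrable (fun p : ℝ × ℝ => g p.1 p.2 ^ 2
        - (2/s) * (g p.1 p.2 * (Real.sqrt (gdeg g p.1) * Real.sqrt (gdeg g p.2))))
        (m01.prod m01) := by
      exact hG2int.sub (hGφint.const_mul (2/s))
    have hint2 : Integrable (fun p : ℝ × ℝ =>
        (1/s)^2 * (Real.sqrt (gdeg g p.1) * Real.sqrt (gdeg g p.2))^2) (m01.prod m01) :=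
      hφφ2int.const_mul _
    have hzero : ∫ p,
        (g p.1 p.2 - (1/s) * (Real.sqrt (gdeg g p.1) * Real.sqrt (gdeg g p.2))) ^ 2
        ∂(m01.prod m01) = 0 := by
      simp_rw [hsq_exp]
      rw [integral_add hint1 hint2, integral_sub hG2int (hGφint.const_mul (2/s)),
        integral_const_mul, integral_const_mul, haeq, hGφ, hφφsq, ← hs2]
      field_simp
      ring
    have hsqint : Integrable (fun p : ℝ × ℝ =>
        (g p.1 p.2 - (1/s) * (Real.sqrt (gdeg g p.1) * Real.sqrt (gdeg g p.2))) ^ 2)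
        (m01.prod m01) := by
      simp_rw [hsq_exp]; exact hint1.add hint2
    have hGuu0 : ∀ᵐ p ∂(m01.prod m01),
        g p.1 p.2 = (1/s) * (Real.sqrt (gdeg g p.1) * Real.sqrt (gdeg g p.2)) := by
      have h0 := (integral_eq_zero_iff_of_nonneg_ae
        (Filter.Eventually.of_forall fun p => sq_nonneg _) hsqint).1 hzero
      filter_upwards [h0] with p hp
      simp only [Pi.zero_apply] at hp
      have h' := sq_eq_zero_iff.mp hp
      linarith
    -- build u
    set r := Real.sqrt s with hr_def
    have hrpos : 0 < r := Real.sqrt_pos.mpr hspos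
    have hr2 : r ^ 2 = s := Real.sq_sqrt hspos.le
    set u : ℝ → ℝ := fun x => Real.sqrt (gdeg g x) / r with hu_def
    have hGuu : ∀ᵐ p ∂(m01.prod m01), g p.1 p.2 = u p.1 * u p.2 := by
      filter_upwards [hGuu0] with p hp
      rw [hp]
      simp only [hu_def]
      rw [← hr2, div_mul_div_comm]
      ring
    have hum : Measurable u := hφm.div_const r
    have hu_nonneg : ∀ x, 0 ≤ u x := fun x => div_nonneg (Real.sqrt_nonneg _) hrpos.le
    have huint : Integrable u m01 := by
      refine integrable_of_ae_bdd hum.aestronglyMeasurable (C := 1/r) ?_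
      filter_upwards [hmem1] with x hx
      rw [abs_of_nonneg (hu_nonneg x)]
      simp only [hu_def]
      gcongr
      exact (hφ01 x hx).2
    have hIu_nonneg : 0 ≤ ∫ x, u x ∂m01 := integral_nonneg hu_nonneg
    have hIu : ∫ x, u x ∂m01 = s := by
      have hprod : ∫ p, u p.1 * u p.2 ∂(m01.prod m01)
          = (∫ x, u x ∂m01) * ∫ x, u x ∂m01 := integral_prod_mul u u
      have he3 : e = (∫ x, u x ∂m01) * ∫ x, u x ∂m01 := by
        rw [he2, integral_congr_ae hGuu, hprod]
      have h4 : (∫ x, u x ∂m01) ^ 2 = e := by rw [he3]; ring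
      calc ∫ x, u x ∂m01 = Real.sqrt ((∫ x, u x ∂m01) ^ 2) :=
            (Real.sqrt_sq hIu_nonneg).symm
        _ = Real.sqrt e := by rw [h4]
        _ = s := hs_def.symm
    -- u is a.e. 0/1 valued
    have hslice := Measure.ae_ae_of_ae_prod hGuu
    have hd_slice : ∀ᵐ x ∂m01, gdeg g x = u x * s := by
      filter_upwards [hslice] with x hx
      calc gdeg g x = ∫ y, u x * u y ∂m01 := integral_congr_ae hx
        _ = u x * ∫ y, u y ∂m01 := integral_const_mul _ _
        _ = u x * s := by rw [hIu]
    have hu01 : ∀ᵐ x ∂m01, u x = 0 ∨ u x = 1 := by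
      filter_upwards [hd_slice, hmem1] with x h1 hx
      have hφx : Real.sqrt (gdeg g x) ^ 2 = gdeg g x := Real.sq_sqrt (hd0 x hx)
      have hux : Real.sqrt (gdeg g x) = u x * r := by
        simp only [hu_def]; field_simp
      have h2 : u x ^ 2 * s = u x * s := by
        have h5 : (u x * r) ^ 2 = u x * s := by rw [← hux, hφx, h1]
        nlinarith [hr2]
      have h4 : u x ^ 2 = u x := mul_right_cancel₀ hsne h2
      have h3 : u x * (u x - 1) = 0 := by nlinarith [h4]
      rcases mul_eq_zero.mp h3 with h | h
      · exact Or.inl h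
      · exact Or.inr (by linarith [sub_eq_zero.mp h])
    -- the set A
    have hAm : MeasurableSet (Icc (0:ℝ) 1 ∩ u ⁻¹' Ici (1/2 : ℝ)) :=
      measurableSet_Icc.inter (hum measurableSet_Ici)
    have hu_ind : ∀ᵐ x ∂m01,
        u x = (Icc (0:ℝ) 1 ∩ u ⁻¹' Ici (1/2 : ℝ)).indicator (fun _ => (1:ℝ)) x := by
      filter_upwards [hu01, hmem1] with x h01 hx
      rcases h01 with h | h
      · have hnot : x ∉ Icc (0:ℝ) 1 ∩ u ⁻¹' Ici (1/2 : ℝ) := by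
          intro hmem
          have h12 : (1/2 : ℝ) ≤ u x := hmem.2
          rw [h] at h12
          norm_num at h12
        rw [h, indicator_of_notMem hnot]
      · have hmem : x ∈ Icc (0:ℝ) 1 ∩ u ⁻¹' Ici (1/2 : ℝ) :=
          mem_inter hx (by simp only [mem_preimage, mem_Ici, h]; norm_num)
        rw [h, indicator_of_mem hmem]
    refine ⟨Icc (0:ℝ) 1 ∩ u ⁻¹' Ici (1/2 : ℝ), hAm, inter_subset_left, ?_, ?_⟩
    · -- the measure computation
      have h1 : ∫ x, (Icc (0:ℝ) 1 ∩ u ⁻¹' Ici (1/2:ℝ)).indicator (fun _ => (1:ℝ)) x ∂m01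
          = s := by rw [← integral_congr_ae hu_ind, hIu]
      rw [integral_indicator_const (1:ℝ) hAm] at h1
      have h2 : (m01 (Icc (0:ℝ) 1 ∩ u ⁻¹' Ici (1/2:ℝ))).toReal = s := by simpa [Measure.real] using h1
      have h3 : m01 (Icc (0:ℝ) 1 ∩ u ⁻¹' Ici (1/2:ℝ))
          = volume (Icc (0:ℝ) 1 ∩ u ⁻¹' Ici (1/2:ℝ)) := by
        rw [show m01 = volume.restrict (Icc (0:ℝ) 1) from rfl, Measure.restrict_apply hAm,
          inter_eq_left.mpr inter_subset_left]
      rw [← h3, ← h2]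
      exact (ENNReal.ofReal_toReal (measure_ne_top m01 _)).symm
    · -- the a.e. identity
      rw [hπ]
      have l1 : ∀ᵐ p : ℝ × ℝ ∂(m01.prod m01),
          u p.1 = (Icc (0:ℝ) 1 ∩ u ⁻¹' Ici (1/2:ℝ)).indicator (fun _ => (1:ℝ)) p.1 :=
        Measure.quasiMeasurePreserving_fst.ae hu_ind
      have l2 : ∀ᵐ p : ℝ × ℝ ∂(m01.prod m01),
          u p.2 = (Icc (0:ℝ) 1 ∩ u ⁻¹' Ici (1/2:ℝ)).indicator (fun _ => (1:ℝ)) p.2 :=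
        Measure.quasiMeasurePreserving_snd.ae hu_ind
      filter_upwards [hGuu, l1, l2] with p h h1 h2
      rw [h, h1, h2]
end

section
/- Let 0 ≤ ε ≤ 1/2 and define the graphon ĝ on [0,1]² by ĝ(x,y) = 1/2 + ε if exactly one of x, y is less than 1/2, and ĝ(x,y) = 1/2 - ε if x, y are both less than 1/2 or both at least 1/2. Then e(ĝ) = 1/2, t(ĝ) = 1/8 - ε³, and I(ĝ) = I₀(1/2 + ε). (Hence, combined with the lower bound I(g) ≥ I₀(1/2 + ε) valid for all graphons with e(g)=1/2 and t(g) = 1/8 - ε³, the maximal entropy satisfies s(1/2, t) = -I₀(1/2 + (1/8 - t)^{1/3}) for 0 ≤ t ≤ 1/8.) -/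
open MeasureTheory Set

/-- Integral over `[0,1]` of a step function jumping at `1/2`. -/
lemma half_int (a b : ℝ) :
    ∫ t in Icc (0:ℝ) 1, (if t < 1/2 then a else b) = (a + b) / 2 := by
  have hu : Ico (0:ℝ) (1/2) ∪ Icc (1/2) 1 = Icc 0 1 :=
    Ico_union_Icc_eq_Icc (by norm_num) (by norm_num)
  have hd : Disjoint (Ico (0:ℝ) (1/2)) (Icc (1/2) 1) := by
    apply Set.disjoint_left.mpr
    rintro t ⟨_, h1⟩ ⟨h2, _⟩; linarith
  have hi1 : IntegrableOn (fun t : ℝ => if t < 1/2 then a else b) (Ico 0 (1/2)) :=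
    ((integrableOn_const_iff (by simp)).mpr (Or.inr (by simp [Real.volume_Ico]))).congr_fun
      (fun t ht => (if_pos ht.2).symm) measurableSet_Ico
  have hi2 : IntegrableOn (fun t : ℝ => if t < 1/2 then a else b) (Icc (1/2) 1) :=
    ((integrableOn_const_iff (by simp)).mpr (Or.inr (by simp [Real.volume_Icc]))).congr_fun
      (fun t ht => (if_neg (not_lt.mpr ht.1)).symm) measurableSet_Icc
  rw [← hu, setIntegral_union hd measurableSet_Icc hi1 hi2,
      setIntegral_congr_fun measurableSet_Ico (fun t ht => if_pos ht.2),
      setIntegral_congr_fun measurableSet_Icc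
        (fun t (ht : t ∈ Icc (1/2:ℝ) 1) => if_neg (not_lt.mpr ht.1)),
      integral_const, integral_const]
  simp [Real.volume_Ico, Real.volume_Icc]
  norm_num
  ring

/-- The block graphon `ĝ`, taking value `1/2 + ε` when exactly one of `x, y` is
below `1/2` and `1/2 - ε` otherwise, has `e(ĝ) = 1/2`, `t(ĝ) = 1/8 - ε³` and
`I(ĝ) = I₀(1/2 + ε)`. -/
theorem block_graphon_values (ε : ℝ) (hε0 : 0 ≤ ε) (hε1 : ε ≤ 1/2)
    (ghat : ℝ → ℝ → ℝ)
    (hdef : ∀ x y : ℝ, ghat x y =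
      if (x < 1/2 ∧ ¬ y < 1/2) ∨ (¬ x < 1/2 ∧ y < 1/2)
      then 1/2 + ε else 1/2 - ε) :
    IsGraphon ghat ∧ edgeDensity ghat = 1/2 ∧
      triangleDensity ghat = 1/8 - ε ^ 3 ∧ rateFn ghat = I0 (1/2 + ε) := by
  classical
  refine ⟨⟨?_, ?_, ?_⟩, ?_, ?_, ?_⟩
  · -- measurability
    have heq : Function.uncurry ghat = fun p : ℝ × ℝ =>
        if (p.1 < 1/2 ∧ ¬ p.2 < 1/2) ∨ (¬ p.1 < 1/2 ∧ p.2 < 1/2)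
        then 1/2 + ε else 1/2 - ε := funext fun p => hdef p.1 p.2
    rw [heq]
    have h1 : MeasurableSet {p : ℝ × ℝ | p.1 < 1/2} :=
      measurableSet_lt measurable_fst measurable_const
    have h2 : MeasurableSet {p : ℝ × ℝ | p.2 < 1/2} :=
      measurableSet_lt measurable_snd measurable_const
    exact Measurable.ite ((h1.inter h2.compl).union (h1.compl.inter h2))
      measurable_const measurable_const
  · -- symmetry
    intro x _ y _
    rw [hdef, hdef]
    exact if_congr (by tauto) rfl rfl
  · -- range
    intro x _ y _
    rw [hdef]
    split <;> constructor <;> linarith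
  · -- edge density
    have key : ∀ x : ℝ, ∫ y in Icc (0:ℝ) 1, ghat x y = 1/2 := by
      intro x
      by_cases hx : x < 1/2
      · have h : ∀ y : ℝ, ghat x y = if y < 1/2 then 1/2 - ε else 1/2 + ε := fun y => by
          by_cases hy : y < 1/2 <;> rw [hdef] <;> split_ifs <;> first | rfl | tauto
        simp_rw [h, half_int]; ring
      · have h : ∀ y : ℝ, ghat x y = if y < 1/2 then 1/2 + ε else 1/2 - ε := fun y => by
          by_cases hy : y < 1/2 <;> rw [hdef] <;> split_ifs <;> first | rfl | tauto
        simp_rw [h, half_int]; ring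
    rw [edgeDensity]
    simp_rw [key, integral_const]
    simp [Real.volume_Icc]
  · -- triangle density
    have hzint : ∀ x y : ℝ, ∫ z in Icc (0:ℝ) 1, ghat y z * ghat z x =
        if ((y < 1/2 ∧ x < 1/2) ∨ (¬ y < 1/2 ∧ ¬ x < 1/2))
        then ((1/2 - ε) * (1/2 - ε) + (1/2 + ε) * (1/2 + ε)) / 2
        else ((1/2 + ε) * (1/2 - ε) + (1/2 - ε) * (1/2 + ε)) / 2 := by
      intro x y
      by_cases hx : x < 1/2 <;> by_cases hy : y < 1/2
      · have h : ∀ z : ℝ, ghat y z * ghat z x =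
            if z < 1/2 then (1/2 - ε) * (1/2 - ε) else (1/2 + ε) * (1/2 + ε) := fun z => by
          by_cases hz : z < 1/2 <;> rw [hdef, hdef] <;> split_ifs <;> first | rfl | tauto
        simp_rw [h, half_int]
        rw [if_pos (Or.inl ⟨hy, hx⟩)]
      · have h : ∀ z : ℝ, ghat y z * ghat z x =
            if z < 1/2 then (1/2 + ε) * (1/2 - ε) else (1/2 - ε) * (1/2 + ε) := fun z => by
          by_cases hz : z < 1/2 <;> rw [hdef, hdef] <;> split_ifs <;> first | rfl | tauto
        simp_rw [h, half_int]
        rw [if_neg (by tauto)]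
      · have h : ∀ z : ℝ, ghat y z * ghat z x =
            if z < 1/2 then (1/2 - ε) * (1/2 + ε) else (1/2 + ε) * (1/2 - ε) := fun z => by
          by_cases hz : z < 1/2 <;> rw [hdef, hdef] <;> split_ifs <;> first | rfl | tauto
        simp_rw [h, half_int]
        rw [if_neg (by tauto)]; ring
      · have h : ∀ z : ℝ, ghat y z * ghat z x =
            if z < 1/2 then (1/2 + ε) * (1/2 + ε) else (1/2 - ε) * (1/2 - ε) := fun z => by
          by_cases hz : z < 1/2 <;> rw [hdef, hdef] <;> split_ifs <;> first | rfl | tauto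
        simp_rw [h, half_int]
        rw [if_pos (Or.inr ⟨hy, hx⟩)]; ring
    have hyint : ∀ x : ℝ, (∫ y in Icc (0:ℝ) 1, ghat x y *
        (if ((y < 1/2 ∧ x < 1/2) ∨ (¬ y < 1/2 ∧ ¬ x < 1/2))
         then ((1/2 - ε) * (1/2 - ε) + (1/2 + ε) * (1/2 + ε)) / 2
         else ((1/2 + ε) * (1/2 - ε) + (1/2 - ε) * (1/2 + ε)) / 2)) =
        ((1/2 - ε) * (((1/2 - ε) * (1/2 - ε) + (1/2 + ε) * (1/2 + ε)) / 2) +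
         (1/2 + ε) * (((1/2 + ε) * (1/2 - ε) + (1/2 - ε) * (1/2 + ε)) / 2)) / 2 := by
      intro x
      by_cases hx : x < 1/2
      · have h : ∀ y : ℝ, ghat x y *
            (if ((y < 1/2 ∧ x < 1/2) ∨ (¬ y < 1/2 ∧ ¬ x < 1/2))
             then ((1/2 - ε) * (1/2 - ε) + (1/2 + ε) * (1/2 + ε)) / 2
             else ((1/2 + ε) * (1/2 - ε) + (1/2 - ε) * (1/2 + ε)) / 2) =
            if y < 1/2
            then (1/2 - ε) * (((1/2 - ε) * (1/2 - ε) + (1/2 + ε) * (1/2 + ε)) / 2)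
            else (1/2 + ε) * (((1/2 + ε) * (1/2 - ε) + (1/2 - ε) * (1/2 + ε)) / 2) := fun y => by
          by_cases hy : y < 1/2 <;> rw [hdef] <;> split_ifs <;> first | rfl | tauto
        simp_rw [h, half_int]
      · have h : ∀ y : ℝ, ghat x y *
            (if ((y < 1/2 ∧ x < 1/2) ∨ (¬ y < 1/2 ∧ ¬ x < 1/2))
             then ((1/2 - ε) * (1/2 - ε) + (1/2 + ε) * (1/2 + ε)) / 2
             else ((1/2 + ε) * (1/2 - ε) + (1/2 - ε) * (1/2 + ε)) / 2) =
            if y < 1/2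
            then (1/2 + ε) * (((1/2 + ε) * (1/2 - ε) + (1/2 - ε) * (1/2 + ε)) / 2)
            else (1/2 - ε) * (((1/2 - ε) * (1/2 - ε) + (1/2 + ε) * (1/2 + ε)) / 2) := fun y => by
          by_cases hy : y < 1/2 <;> rw [hdef] <;> split_ifs <;> first | rfl | tauto
        simp_rw [h, half_int]; ring
    rw [triangleDensity]
    simp_rw [mul_assoc, integral_const_mul, hzint, hyint, integral_const]
    simp [Real.volume_Icc]
    ring
  · -- rate function
    have h : ∀ x y : ℝ, I0 (ghat x y) = I0 (1/2 + ε) := by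
      intro x y
      rw [hdef]
      split
      · rfl
      · show I0 (1/2 - ε) = I0 (1/2 + ε)
        unfold I0
        rw [show (1:ℝ) - (1/2 - ε) = 1/2 + ε from by ring,
            show (1:ℝ) - (1/2 + ε) = 1/2 - ε from by ring]
        ring
    rw [rateFn]
    simp_rw [h, integral_const]
    simp [Real.volume_Icc]
end
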